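/- arXiv:2411.12754 — 10 statements merged into one kernel-verified Lean document; each statement's English description precedes it below -/
import Mathlib

section
/- With h defined from binary digits by h(k) = Σ_{i≥1} β_i 2^{⌊(i−1)/2⌋}, if k and ℓ are natural numbers not both odd, then h(k+ℓ) ≤ h(k) + h(ℓ). -/
/-- `h k = Σ_{i≥1} β_i 2^{⌊(i−1)/2⌋}` where `β_i` are the binary digits of `k`. -/
def h (k : ℕ) : ℕ := ∑ i ∈ Finset.Icc 1 k, if k.testBit i then 2 ^ ((i - 1) / 2) else 0

/-- Auxiliary function: `g a = Σ_{i≥0} a_i 2^{⌊i/2⌋}`, via base-4 recursion. -/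
def g : ℕ → ℕ
  | 0 => 0
  | (a + 1) => ((a + 1) % 4 % 2 + (a + 1) % 4 / 2) + 2 * g ((a + 1) / 4)
decreasing_by exact Nat.div_lt_self (Nat.succ_pos _) (by norm_num)

lemma g_eq (a : ℕ) : g a = (a % 4 % 2 + a % 4 / 2) + 2 * g (a / 4) := by
  cases a with
  | zero => simp [g]
  | succ n => rw [g]

lemma g_one : g 1 = 1 := by rw [g_eq]; norm_num [g]

lemma g_le_one {e : ℕ} (he : e ≤ 1) : g e ≤ e := by
  interval_cases e
  · simp [g]
  · rw [g_one]

/-- Subadditivity of `g`. -/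
lemma g_subadd (a b : ℕ) : g (a + b) ≤ g a + g b := by
  generalize hn : a + b = n
  induction n using Nat.strong_induction_on generalizing a b with
  | _ n ih =>
  subst hn
  by_cases h0 : a + b = 0
  · obtain ⟨rfl, rfl⟩ : a = 0 ∧ b = 0 := by omega
    simp [g]
  set r := a % 4 with hr
  set s := b % 4 with hs
  have hr4 : r < 4 := Nat.mod_lt _ (by norm_num)
  have hs4 : s < 4 := Nat.mod_lt _ (by norm_num)
  have ha : a = 4 * (a / 4) + r := by omega
  have hb : b = 4 * (b / 4) + s := by omega
  set e := (r + s) / 4 with he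
  set t := (r + s) % 4 with ht
  have he1 : e ≤ 1 := by omega
  have hmod : (a + b) % 4 = t := by omega
  have hdiv : (a + b) / 4 = a / 4 + b / 4 + e := by omega
  have step1 : g (a / 4 + b / 4 + e) ≤ g (a / 4 + b / 4) + g e := by
    rcases Nat.eq_zero_or_pos e with h1 | h1
    · simp [h1, g]
    · exact ih (a / 4 + b / 4 + e) (by omega) _ _ rfl
  have step2 : g (a / 4 + b / 4) ≤ g (a / 4) + g (b / 4) :=
    ih (a / 4 + b / 4) (by omega) _ _ rfl
  have key : g (a / 4 + b / 4 + e) ≤ g (a / 4) + g (b / 4) + e := by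
    have := g_le_one he1
    omega
  have digit : t % 2 + t / 2 + 2 * e ≤ (r % 2 + r / 2) + (s % 2 + s / 2) := by omega
  calc g (a + b) = (t % 2 + t / 2) + 2 * g (a / 4 + b / 4 + e) := by
        rw [g_eq, hmod, hdiv]
    _ ≤ ((r % 2 + r / 2) + 2 * g (a / 4)) + ((s % 2 + s / 2) + 2 * g (b / 4)) := by omega
    _ = g a + g b := by rw [g_eq a, g_eq b]

/-- `g` as a finite sum of binary digits. -/
lemma sum_eq_g : ∀ N a : ℕ, a < 2 ^ N →
    (∑ i ∈ Finset.range N, if a.testBit i then 2 ^ (i / 2) else 0) = g a := by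
  intro N
  induction N using Nat.strong_induction_on with
  | _ N ih =>
  intro a ha
  match N with
  | 0 =>
    interval_cases a
    simp [g]
  | 1 =>
    interval_cases a <;> simp [g_one, g, Nat.testBit]
  | (M + 2) =>
    have ha4 : a / 4 < 2 ^ M := by
      have h4 : (2:ℕ) ^ (M + 2) = 4 * 2 ^ M := by ring
      omega
    have hrec := ih M (by omega) (a / 4) ha4
    have hshift : ∀ i, a.testBit (i + 1 + 1) = (a / 4).testBit i := by
      intro i
      rw [Nat.testBit_add_one, Nat.testBit_add_one, Nat.div_div_eq_div_mul]
    rw [Finset.sum_range_succ', Finset.sum_range_succ', g_eq a]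
    have h1 : (∑ i ∈ Finset.range M,
        if a.testBit (i + 1 + 1) then 2 ^ ((i + 1 + 1) / 2) else 0) = 2 * g (a / 4) := by
      rw [← hrec, Finset.mul_sum]
      refine Finset.sum_congr rfl fun i _ => ?_
      rw [hshift]
      have h2 : (i + 1 + 1) / 2 = i / 2 + 1 := by omega
      rw [h2, pow_succ]
      split <;> ring
    rw [h1]
    simp only [Nat.testBit_add_one, Nat.testBit_zero, Nat.zero_div, pow_zero,
      decide_eq_true_eq]
    split_ifs <;> omega

lemma h_eq (k : ℕ) : h k = g (k / 2) := by
  unfold h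
  rw [← Finset.Ico_add_one_right_eq_Icc, Finset.sum_Ico_eq_sum_range]
  have hk : k + 1 - 1 = k := by omega
  rw [hk]
  have heq : (∑ i ∈ Finset.range k, if k.testBit (1 + i) then 2 ^ ((1 + i - 1) / 2) else 0)
      = ∑ i ∈ Finset.range k, if (k / 2).testBit i then 2 ^ (i / 2) else 0 := by
    refine Finset.sum_congr rfl fun i _ => ?_
    have h1 : 1 + i = i + 1 := by ring
    rw [h1, Nat.testBit_add_one]
    have h2 : i + 1 - 1 = i := by omega
    rw [h2]
  rw [heq]
  exact sum_eq_g k (k / 2) (lt_of_le_of_lt (Nat.div_le_self k 2) (Nat.lt_two_pow_self (n := k)))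

theorem h_add_le (k l : ℕ) (hkl : ¬ (Odd k ∧ Odd l)) :
    h (k + l) ≤ h k + h l := by
  rw [Nat.odd_iff, Nat.odd_iff] at hkl
  have hpar : (k + l) / 2 = k / 2 + l / 2 := by omega
  rw [h_eq, h_eq, h_eq, hpar]
  exact g_subadd _ _
end

section
/- With h defined from binary digits by h(k) = Σ_{i≥1} β_i 2^{⌊(i−1)/2⌋}: (a) if k is even then h(k+1) = h(k); (b) if k is odd then h(k+1) ≤ h(k) + 1. -/
lemma h_eq_range (n N : ℕ) (hN : n ≤ N) :
    h n = ∑ j ∈ Finset.range N, if n.testBit (j + 1) then 2 ^ (j / 2) else 0 := by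
  have h1 : h n = ∑ i ∈ Finset.Icc 1 N, if n.testBit i then 2 ^ ((i - 1) / 2) else 0 := by
    unfold h
    apply Finset.sum_subset (Finset.Icc_subset_Icc_right hN)
    intro i hi hni
    simp only [Finset.mem_Icc] at hi hni
    have hin : n < i := by omega
    have h2 : n < 2 ^ i := lt_of_lt_of_le hin (Nat.le_of_lt (Nat.lt_two_pow_self (n := i)))
    rw [Nat.testBit_lt_two_pow h2]
    simp
  rw [h1, show Finset.Icc 1 N = Finset.Ico 1 (N + 1) by rfl, Finset.sum_Ico_eq_sum_range]
  have : N + 1 - 1 = N := by omega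
  rw [this]
  apply Finset.sum_congr rfl
  intro j _
  rw [add_comm 1 j]
  simp

lemma h_rec (n : ℕ) : h n =
    (if n.testBit 1 then 1 else 0) + (if n.testBit 2 then 1 else 0) + 2 * h (n / 4) := by
  rw [h_eq_range n (n + 2) (by omega), Finset.sum_range_succ', Finset.sum_range_succ']
  have hbit : ∀ j : ℕ, n.testBit (j + 1 + 1 + 1) = (n / 4).testBit (j + 1) := by
    intro j
    rw [Nat.testBit_eq_decide_div_mod_eq, Nat.testBit_eq_decide_div_mod_eq]
    congr 2
    rw [Nat.div_div_eq_div_mul]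
    congr 1
    ring_nf
  have hsum : (∑ j ∈ Finset.range n,
      if n.testBit (j + 1 + 1 + 1) then 2 ^ ((j + 1 + 1) / 2) else 0) = 2 * h (n / 4) := by
    rw [h_eq_range (n / 4) n (Nat.div_le_self n 4), Finset.mul_sum]
    apply Finset.sum_congr rfl
    intro j _
    rw [hbit j]
    have : (j + 1 + 1) / 2 = j / 2 + 1 := by omega
    rw [this, pow_succ]
    split <;> ring_nf
  rw [hsum]
  norm_num
  ring_nf

theorem h_succ (k : ℕ) :
    (Even k → h (k + 1) = h k) ∧ (Odd k → h (k + 1) ≤ h k + 1) := by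
  induction k using Nat.strong_induction_on with
  | _ k ih =>
  constructor
  · intro hk
    have hk2 : k % 2 = 0 := Nat.even_iff.mp hk
    rw [h_rec (k + 1), h_rec k]
    simp only [Nat.testBit_eq_decide_div_mod_eq, pow_one, show (2:ℕ)^2 = 4 from rfl]
    rw [show (k + 1) / 2 % 2 = k / 2 % 2 by omega,
      show (k + 1) / 4 % 2 = k / 4 % 2 by omega,
      show (k + 1) / 4 = k / 4 by omega]
  · intro hk
    have hk2 : k % 2 = 1 := Nat.odd_iff.mp hk
    rw [h_rec (k + 1), h_rec k]
    simp only [Nat.testBit_eq_decide_div_mod_eq, pow_one, show (2:ℕ)^2 = 4 from rfl]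
    rcases Nat.lt_or_ge (k % 4) 2 with h4 | h4
    · -- k % 4 = 1
      have h41 : k % 4 = 1 := by omega
      rw [show (k + 1) / 2 % 2 = 1 by omega, show k / 2 % 2 = 0 by omega,
        show (k + 1) / 4 % 2 = k / 4 % 2 by omega,
        show (k + 1) / 4 = k / 4 by omega]
      simp
      split <;> omega
    · -- k % 4 = 3
      have h43 : k % 4 = 3 := by omega
      have hlt : k / 4 < k := by omega
      obtain ⟨ihe, iho⟩ := ih (k / 4) hlt
      rw [show (k + 1) / 2 % 2 = 0 by omega, show k / 2 % 2 = 1 by omega,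
        show (k + 1) / 4 = k / 4 + 1 by omega]
      rcases Nat.even_or_odd (k / 4) with he | ho
      · have h0 : k / 4 % 2 = 0 := Nat.even_iff.mp he
        have := ihe he
        rw [show (k / 4 + 1) % 2 = 1 by omega, h0, this]
        simp
      · have h1 : k / 4 % 2 = 1 := Nat.odd_iff.mp ho
        have := iho ho
        rw [show (k / 4 + 1) % 2 = 0 by omega, h1]
        simp
        omega
end

section
/- With h defined from binary digits by h(k) = Σ_{i≥1} β_i 2^{⌊(i−1)/2⌋}, for every natural number k one has h(k+4) ≤ h(k) + 1 and h(k+3) ≤ h(k) + 1. -/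
private def F (k i : ℕ) : ℕ := if k.testBit i then 2 ^ ((i - 1) / 2) else 0

private lemma h_eq_s7 (k n : ℕ) (hn : k ≤ n) :
    h k = ∑ i ∈ Finset.range n, F k (1 + i) := by
  unfold h F
  rw [← Finset.Ico_add_one_right_eq_Icc, Finset.sum_Ico_eq_sum_range]
  apply Finset.sum_subset (Finset.range_subset_range.mpr hn)
  intro i _ hik
  rw [Finset.mem_range, not_lt] at hik
  have hlt : k < 2 ^ (1 + i) := by
    calc k ≤ i := hik
    _ < 2 ^ i := Nat.lt_two_pow_self
    _ ≤ 2 ^ (1 + i) := Nat.pow_le_pow_right (by norm_num) (by omega)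
  rw [Nat.testBit_lt_two_pow hlt]
  simp

private lemma F_step (k j : ℕ) : F k (j + 3) = 2 * F (k / 4) (j + 1) := by
  have hb : k.testBit (j + 3) = (k / 4).testBit (j + 1) := by
    have : k / 4 = k / 2 / 2 := by omega
    rw [this, Nat.testBit_div_two, Nat.testBit_div_two]
  unfold F
  rw [hb]
  have he : (j + 3 - 1) / 2 = (j + 1 - 1) / 2 + 1 := by omega
  rw [he, pow_succ]
  split <;> ring

private lemma sum_shift (k n : ℕ) :
    ∑ i ∈ Finset.range (n + 2), F k (1 + i) =
      F k 1 + F k 2 + 2 * ∑ i ∈ Finset.range n, F (k / 4) (1 + i) := by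
  induction n with
  | zero => simp [Finset.sum_range_succ]
  | succ n ih =>
    rw [show n + 1 + 2 = (n + 2) + 1 by rfl, Finset.sum_range_succ, ih,
      Finset.sum_range_succ, show 1 + (n + 2) = n + 3 by ring, F_step,
      show 1 + n = n + 1 by ring]
    ring

private lemma h_rec_s7 (k : ℕ) : h k = k / 2 % 2 + k / 4 % 2 + 2 * h (k / 4) := by
  rw [h_eq_s7 k (k + 2) (by omega), h_eq_s7 (k / 4) k (Nat.div_le_self _ _), sum_shift]
  have h1 : F k 1 = k / 2 % 2 := by
    unfold F
    rw [Nat.testBit_eq_decide_div_mod_eq]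
    have : k / 2 % 2 = 0 ∨ k / 2 % 2 = 1 := by omega
    rcases this with h | h <;> simp [h]
  have h2 : F k 2 = k / 4 % 2 := by
    unfold F
    rw [Nat.testBit_eq_decide_div_mod_eq]
    have h4 : 2 ^ 2 = 4 := by norm_num
    rw [h4]
    have : k / 4 % 2 = 0 ∨ k / 4 % 2 = 1 := by omega
    rcases this with h | h <;> simp [h]
  rw [h1, h2]

private lemma h_even (k : ℕ) (hk : k % 2 = 0) : h (k + 1) = h k := by
  rw [h_rec_s7 (k + 1), h_rec_s7 k,
    show (k + 1) / 2 = k / 2 by omega, show (k + 1) / 4 = k / 4 by omega]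

private lemma h_succ_le (k : ℕ) : h (k + 1) ≤ h k + 1 := by
  induction k using Nat.strong_induction_on with
  | _ k ih =>
    by_cases h2 : k % 2 = 0
    · rw [h_even k h2]; omega
    · by_cases h4 : k % 4 = 1
      · rw [h_rec_s7 (k + 1), h_rec_s7 k, show (k + 1) / 4 = k / 4 by omega]
        omega
      · have h43 : k % 4 = 3 := by omega
        rw [h_rec_s7 (k + 1), h_rec_s7 k, show (k + 1) / 4 = k / 4 + 1 by omega]
        by_cases hq : k / 4 % 2 = 0
        · have := h_even (k / 4) hq
          omega
        · have := ih (k / 4) (by omega)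
          omega

private lemma key (q : ℕ) : (q + 1) % 2 + 2 * h (q + 1) ≤ q % 2 + 2 * h q + 1 := by
  by_cases hq : q % 2 = 0
  · rw [h_even q hq]; omega
  · have := h_succ_le q; omega

theorem h_add_three_four (k : ℕ) :
    h (k + 4) ≤ h k + 1 ∧ h (k + 3) ≤ h k + 1 := by
  constructor
  · rw [h_rec_s7 (k + 4), h_rec_s7 k, show (k + 4) / 4 = k / 4 + 1 by omega]
    have := key (k / 4)
    omega
  · rw [h_rec_s7 (k + 3), h_rec_s7 k]
    by_cases h4 : k % 4 = 0
    · rw [show (k + 3) / 4 = k / 4 by omega]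
      omega
    · rw [show (k + 3) / 4 = k / 4 + 1 by omega]
      have := key (k / 4)
      omega
end

section
/- For every odd natural number k ≥ 1, with h(k) = Σ_{i≥1} β_i 2^{⌊(i−1)/2⌋} built from the binary digits of k, one has 1 + √(k−1)/2 ≤ h(k) + 1 ≤ (3/2)√(k+1) − 1; in particular √k/2 < h(k)+1 < (3/2)√k for k > 1. -/
/-- The pair `(g1 m, g2 m)` with `g1 m = Σ bit_j(m) 2^⌊j/2⌋`, `g2 m = Σ bit_j(m) 2^⌈j/2⌉`. -/
def G : ℕ → ℕ × ℕ
  | 0 => (0, 0)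
  | (m + 1) =>
    ((m + 1) % 2 + (G ((m + 1) / 2)).2, (m + 1) % 2 + 2 * (G ((m + 1) / 2)).1)
decreasing_by exact Nat.div_lt_self (Nat.succ_pos m) one_lt_two

lemma G_inv (m : ℕ) :
    m ≤ 2 * (G m).1 ^ 2 ∧ m ≤ (G m).2 ^ 2 ∧
      2 * ((G m).1 + 2) ^ 2 ≤ 9 * (m + 1) ∧ ((G m).2 + 3) ^ 2 ≤ 9 * (m + 1) ∧
      (1 ≤ m → 1 ≤ (G m).1) ∧ (1 ≤ m → 1 ≤ (G m).2) := by
  induction m using Nat.strong_induction_on with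
  | _ m IH =>
    match m with
    | 0 => simp [G]
    | (m + 1) =>
      have hlt : (m + 1) / 2 < m + 1 := Nat.div_lt_self (Nat.succ_pos m) one_lt_two
      obtain ⟨A1, A2, B1, B2, C1, C2⟩ := IH _ hlt
      rw [G]
      dsimp only
      have hmb : m + 1 = 2 * ((m + 1) / 2) + (m + 1) % 2 := by omega
      rcases Nat.mod_two_eq_zero_or_one (m + 1) with hb | hb <;> rw [hb] <;> rw [hb] at hmb
      · have hm' : 1 ≤ (m + 1) / 2 := by omega
        have hx := C1 hm'
        have hy := C2 hm'
        exact ⟨by nlinarith, by nlinarith, by nlinarith, by nlinarith,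
          fun _ => by omega, fun _ => by omega⟩
      · exact ⟨by nlinarith [Nat.zero_le (G ((m + 1) / 2)).2],
          by nlinarith [Nat.zero_le (G ((m + 1) / 2)).1], by nlinarith, by nlinarith,
          fun _ => by omega, fun _ => by omega⟩


lemma G_eq_sum (n : ℕ) : ∀ m : ℕ, m < 2 ^ n →
    (G m).1 = ∑ j ∈ Finset.range n, (if m.testBit j then 2 ^ (j / 2) else 0) ∧
    (G m).2 = ∑ j ∈ Finset.range n, (if m.testBit j then 2 ^ ((j + 1) / 2) else 0) := by
  induction n with
  | zero =>
    intro m hm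
    interval_cases m
    simp [G]
  | succ n IH =>
    intro m hm
    match m with
    | 0 => simp [G, Nat.zero_testBit]
    | (m + 1) =>
      have hlt : (m + 1) / 2 < 2 ^ n := by
        have : 2 ^ (n + 1) = 2 * 2 ^ n := by ring
        omega
      obtain ⟨IH1, IH2⟩ := IH ((m + 1) / 2) hlt
      rw [G]
      constructor
      · rw [Finset.sum_range_succ']
        simp only [Nat.testBit_succ, Nat.testBit_zero]
        rw [← IH2]
        have h1 : (if (decide ((m + 1) % 2 = 1) : Bool) then 2 ^ (0 / 2) else 0)
            = (m + 1) % 2 := by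
          rcases Nat.mod_two_eq_zero_or_one (m + 1) with h | h <;> simp [h]
        rw [h1]
        omega
      · rw [Finset.sum_range_succ']
        simp only [Nat.testBit_succ, Nat.testBit_zero]
        have h1 : (if (decide ((m + 1) % 2 = 1) : Bool) then 2 ^ ((0 + 1) / 2) else 0)
            = (m + 1) % 2 := by
          rcases Nat.mod_two_eq_zero_or_one (m + 1) with h | h <;> simp [h]
        rw [h1]
        have h2 : ∀ j : ℕ, (if ((m + 1) / 2).testBit j then 2 ^ ((j + 1 + 1) / 2) else 0)
            = 2 * (if ((m + 1) / 2).testBit j then 2 ^ (j / 2) else 0) := by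
          intro j
          have hj : (j + 1 + 1) / 2 = j / 2 + 1 := by omega
          rw [hj]
          split <;> ring
        rw [Finset.sum_congr rfl fun j _ => h2 j, ← Finset.mul_sum, ← IH1]
        omega

lemma h_eq_s11 (m : ℕ) : h (2 * m + 1) = (G m).1 := by
  have hm : m < 2 ^ (2 * m + 1) := by
    calc m < 2 ^ m := Nat.lt_two_pow_self
    _ ≤ 2 ^ (2 * m + 1) := Nat.pow_le_pow_right (by norm_num) (by omega)
  obtain ⟨H1, _⟩ := G_eq_sum (2 * m + 1) m hm
  rw [h, H1, ← Finset.Ico_add_one_right_eq_Icc, Finset.sum_Ico_eq_sum_range]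
  have hr : 2 * m + 1 + 1 - 1 = 2 * m + 1 := by omega
  rw [hr]
  apply Finset.sum_congr rfl
  intro j _
  have hb : (2 * m + 1).testBit (1 + j) = m.testBit j := by
    rw [Nat.add_comm 1 j, Nat.testBit_succ]
    have hd : (2 * m + 1) / 2 = m := by omega
    rw [hd]
  rw [hb]
  have he : (1 + j - 1) / 2 = j / 2 := by omega
  rw [he]

theorem h_bounds (k : ℕ) (hk : Odd k) (h1 : 1 ≤ k) :
    (1 + Real.sqrt ((k : ℝ) - 1) / 2 ≤ (h k : ℝ) + 1 ∧
      (h k : ℝ) + 1 ≤ (3 / 2) * Real.sqrt ((k : ℝ) + 1) - 1) ∧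
    (1 < k →
      Real.sqrt (k : ℝ) / 2 < (h k : ℝ) + 1 ∧
      (h k : ℝ) + 1 < (3 / 2) * Real.sqrt (k : ℝ)) := by
  obtain ⟨m, hm⟩ := hk
  have hk2 : k = 2 * m + 1 := by omega
  subst hk2
  rw [h_eq_s11]
  obtain ⟨A1, -, B1, -, -, -⟩ := G_inv m
  set g := (G m).1 with hgdef
  clear_value g
  -- natural number inequalities
  have nA : 2 * m ≤ 4 * g ^ 2 := by nlinarith
  have nB : 4 * (g + 2) ^ 2 ≤ 9 * (2 * m + 2) := by nlinarith
  have nC : 2 * m + 1 < 4 * (g + 1) ^ 2 := by nlinarith [Nat.zero_le g]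
  have nD : 4 * (g + 1) ^ 2 < 9 * (2 * m + 1) := by nlinarith [Nat.zero_le g]
  -- cast to reals
  have cA : 2 * (m : ℝ) ≤ 4 * (g : ℝ) ^ 2 := by exact_mod_cast nA
  have cB : 4 * ((g : ℝ) + 2) ^ 2 ≤ 9 * (2 * (m : ℝ) + 2) := by exact_mod_cast nB
  have cC : 2 * (m : ℝ) + 1 < 4 * ((g : ℝ) + 1) ^ 2 := by exact_mod_cast nC
  have cD : 4 * ((g : ℝ) + 1) ^ 2 < 9 * (2 * (m : ℝ) + 1) := by exact_mod_cast nD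
  have hg0 : (0 : ℝ) ≤ (g : ℝ) := Nat.cast_nonneg g
  have hm0 : (0 : ℝ) ≤ (m : ℝ) := Nat.cast_nonneg m
  have hcast : ((2 * m + 1 : ℕ) : ℝ) = 2 * (m : ℝ) + 1 := by push_cast; ring
  rw [hcast]
  constructor
  · constructor
    · have hs : Real.sqrt (2 * (m : ℝ) + 1 - 1) ≤ 2 * (g : ℝ) := by
        calc Real.sqrt (2 * (m : ℝ) + 1 - 1) ≤ Real.sqrt ((2 * (g : ℝ)) ^ 2) :=
          Real.sqrt_le_sqrt (by nlinarith)
        _ = 2 * (g : ℝ) := Real.sqrt_sq (by linarith)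
      linarith
    · have hs : (2 / 3 : ℝ) * ((g : ℝ) + 2) ≤ Real.sqrt (2 * (m : ℝ) + 1 + 1) := by
        calc (2 / 3 : ℝ) * ((g : ℝ) + 2)
            = Real.sqrt (((2 / 3 : ℝ) * ((g : ℝ) + 2)) ^ 2) :=
          (Real.sqrt_sq (by linarith)).symm
        _ ≤ Real.sqrt (2 * (m : ℝ) + 1 + 1) := Real.sqrt_le_sqrt (by nlinarith)
      linarith
  · intro _
    constructor
    · have hs : Real.sqrt (2 * (m : ℝ) + 1) < 2 * ((g : ℝ) + 1) := by
        calc Real.sqrt (2 * (m : ℝ) + 1) < Real.sqrt ((2 * ((g : ℝ) + 1)) ^ 2) :=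
          Real.sqrt_lt_sqrt (by linarith) (by nlinarith)
        _ = 2 * ((g : ℝ) + 1) := Real.sqrt_sq (by linarith)
      linarith
    · have hs : (2 / 3 : ℝ) * ((g : ℝ) + 1) < Real.sqrt (2 * (m : ℝ) + 1) := by
        calc (2 / 3 : ℝ) * ((g : ℝ) + 1)
            = Real.sqrt (((2 / 3 : ℝ) * ((g : ℝ) + 1)) ^ 2) :=
          (Real.sqrt_sq (by linarith)).symm
        _ < Real.sqrt (2 * (m : ℝ) + 1) := Real.sqrt_lt_sqrt (by positivity) (by nlinarith)
      linarith
end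

section
/- For every odd natural number k ≥ 1, (h(k)+2)² ≤ (9/4)(k+1), with equality if and only if k = 4^a − 1 for some a ≥ 1, where h(k) = Σ_{i≥1} β_i 2^{⌊(i−1)/2⌋}. -/
lemma four_pow_eq (c : ℕ) (hc : 1 ≤ c) : (4:ℕ)^c = 4 * 4^(c-1) := by
  conv_lhs => rw [show c = (c-1)+1 by omega]
  rw [pow_succ]; ring

lemma four_pow_pos (c : ℕ) : 1 ≤ (4:ℕ)^c := Nat.one_le_pow _ _ (by norm_num)

lemma h_eq_sum (n N : ℕ) (hN : n ≤ N) :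
    h n = ∑ i ∈ Finset.Icc 1 N, if n.testBit i then 2 ^ ((i - 1) / 2) else 0 := by
  refine Finset.sum_subset (Finset.Icc_subset_Icc_right hN) ?_
  intro i hi hni
  simp only [Finset.mem_Icc] at hi hni
  have h1 : n < i := by omega
  have h2 : n < 2 ^ i := lt_of_lt_of_le h1 (le_of_lt (Nat.lt_two_pow_self (n := i)))
  rw [Nat.testBit_eq_false_of_lt h2]
  simp

lemma key_s13 (n : ℕ) : 4 * (h n + 2)^2 ≤ 9 * (n + 2 - n % 2) ∧
    (4 * (h n + 2)^2 = 9 * (n + 2 - n % 2) ↔ ∃ a, 1 ≤ a ∧ n + 2 - n % 2 = 4 ^ a) := by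
  induction n using Nat.strong_induction_on with
  | _ n ih =>
  rcases lt_or_ge n 4 with h4 | h4
  · interval_cases n
    · have h0 : h 0 = 0 := by decide
      rw [h0]
      refine ⟨by norm_num, ⟨fun heq => by norm_num at heq, ?_⟩⟩
      rintro ⟨a, ha, hae⟩
      have e1 := four_pow_eq a ha
      have p := four_pow_pos (a-1)
      omega
    · have h0 : h 1 = 0 := by decide
      rw [h0]
      refine ⟨by norm_num, ⟨fun heq => by norm_num at heq, ?_⟩⟩
      rintro ⟨a, ha, hae⟩
      have e1 := four_pow_eq a ha
      have p := four_pow_pos (a-1)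
      omega
    · have h0 : h 2 = 1 := by decide
      rw [h0]
      refine ⟨by norm_num, ⟨fun _ => ⟨1, le_refl 1, by norm_num⟩, fun _ => by norm_num⟩⟩
    · have h0 : h 3 = 1 := by decide
      rw [h0]
      refine ⟨by norm_num, ⟨fun _ => ⟨1, le_refl 1, by norm_num⟩, fun _ => by norm_num⟩⟩
  · have hm1 : 1 ≤ n / 4 := by omega
    obtain ⟨hle, hiff⟩ := ih (n/4) (by omega)
    have hrec := h_rec n
    have hb1 : (if n.testBit 1 then (1:ℕ) else 0) = n % 4 / 2 := by
      rw [show n.testBit 1 = decide (n / 2^1 % 2 = 1) from Nat.testBit_eq_decide_div_mod_eq]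
      norm_num
      by_cases hc : n / 2 % 2 = 1 <;> simp [hc] <;> omega
    have hb2 : (if n.testBit 2 then (1:ℕ) else 0) = n / 4 % 2 := by
      rw [show n.testBit 2 = decide (n / 2^2 % 2 = 1) from Nat.testBit_eq_decide_div_mod_eq]
      norm_num
      by_cases hc : n / 4 % 2 = 1 <;> simp [hc] <;> omega
    rw [hb1, hb2] at hrec
    set m := n / 4 with hm
    set u := h m with hu
    -- hrec : h n = n % 4 / 2 + m % 2 + 2 * u
    rcases Nat.lt_or_ge (n % 4) 2 with hr | hr
    · -- r ∈ {0,1}: strict, h n = m%2 + 2u, target 9*(4m+2)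
      have hN : n + 2 - n % 2 = 4*m + 2 := by clear hiff; omega
      have hlt : 4 * (h n + 2)^2 < 9 * (n + 2 - n % 2) := by
        rw [hN]
        rcases Nat.lt_or_ge (m % 2) 1 with he | he
        · have hn2 : h n = 2*u := by clear hiff; omega
          have hM : m + 2 - m % 2 = m + 2 := by clear hiff; omega
          rw [hM] at hle
          rw [hn2]
          rcases Nat.eq_zero_or_pos u with h0 | h0
          · rw [h0]; nlinarith [hm1]
          · nlinarith [hle, h0]
        · have hn2 : h n = 2*u + 1 := by clear hiff; omega
          have hM : m + 2 - m % 2 = m + 1 := by clear hiff; omega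
          rw [hM] at hle
          rw [hn2]
          nlinarith [hle]
      refine ⟨le_of_lt hlt, ⟨fun heq => absurd heq (by clear hiff; omega), ?_⟩⟩
      rintro ⟨a, ha, hae⟩
      exfalso
      have e1 := four_pow_eq a ha
      clear hiff; omega
    · rcases Nat.lt_or_ge (m % 2) 1 with he | he
      · -- r ∈ {2,3}, ε = 0: strict
        have hN : n + 2 - n % 2 = 4*m + 4 := by clear hiff; omega
        have hn2 : h n = 2*u + 1 := by clear hiff; omega
        have hM : m + 2 - m % 2 = m + 2 := by clear hiff; omega
        rw [hM] at hle
        have hlt : 4 * (h n + 2)^2 < 9 * (n + 2 - n % 2) := by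
          rw [hN, hn2]
          rcases Nat.eq_zero_or_pos u with h0 | h0
          · rw [h0]; nlinarith [hm1]
          · nlinarith [hle, h0]
        refine ⟨le_of_lt hlt, ⟨fun heq => absurd heq (by clear hiff; omega), ?_⟩⟩
        rintro ⟨a, ha, hae⟩
        exfalso
        have e1 := four_pow_eq a ha
        rcases Nat.lt_or_ge a 2 with ha2 | ha2
        · have e0 : (4:ℕ)^(a-1) = 1 := by rw [show a-1 = 0 by omega, pow_zero]
          clear hiff; omega
        · have e2 := four_pow_eq (a-1) (by clear hiff; omega)
          clear hiff; omega
      · -- r ∈ {2,3}, ε = 1: equality case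
        have hN : n + 2 - n % 2 = 4*(m + 1) := by clear hiff; omega
        have hn2 : h n = 2*u + 2 := by clear hiff; omega
        have hM : m + 2 - m % 2 = m + 1 := by clear hiff; omega
        rw [hM] at hle hiff
        have hsq : 4 * (h n + 2)^2 = 4 * (4 * (u + 2)^2) := by rw [hn2]; ring
        rw [hsq, hN]
        constructor
        · linarith [hle]
        constructor
        · intro heq
          have h16 : 4 * (u+2)^2 = 9 * (m+1) := by linarith
          obtain ⟨a, ha, hae⟩ := hiff.mp h16
          refine ⟨a+1, by omega, ?_⟩
          have e : (4:ℕ)^(a+1) = 4^a * 4 := pow_succ 4 a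
          clear hiff; omega
        · rintro ⟨a, ha, hae⟩
          have e1 := four_pow_eq a ha
          have ha2 : 2 ≤ a := by
            by_contra hc
            have e0 : (4:ℕ)^(a-1) = 1 := by rw [show a-1 = 0 by omega, pow_zero]
            clear hiff; omega
          have hmm : m + 1 = 4^(a-1) := by clear hiff; omega
          have h16 := hiff.mpr ⟨a-1, by omega, hmm⟩
          linarith

theorem h_max_characterization (k : ℕ) (hk : Odd k) (h1 : 1 ≤ k) :
    ((h k : ℝ) + 2) ^ 2 ≤ (9 / 4) * ((k : ℝ) + 1) ∧
    (((h k : ℝ) + 2) ^ 2 = (9 / 4) * ((k : ℝ) + 1) ↔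
      ∃ a : ℕ, 1 ≤ a ∧ k = 4 ^ a - 1) := by
  have hk2 : k % 2 = 1 := Nat.odd_iff.mp hk
  obtain ⟨hle, hiff⟩ := key_s13 k
  have hN : k + 2 - k % 2 = k + 1 := by clear hiff hk; omega
  rw [hN] at hle hiff
  have hleR : (4:ℝ) * ((h k : ℝ) + 2)^2 ≤ 9 * ((k:ℝ) + 1) := by exact_mod_cast hle
  constructor
  · linarith
  constructor
  · intro heq
    have hEqN : 4 * (h k + 2)^2 = 9 * (k + 1) := by
      have hR : (4:ℝ) * ((h k : ℝ) + 2)^2 = 9 * ((k:ℝ) + 1) := by linarith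
      exact_mod_cast hR
    obtain ⟨a, ha, hae⟩ := hiff.mp hEqN
    exact ⟨a, ha, by clear hiff hk; omega⟩
  · rintro ⟨a, ha, hae⟩
    have hp := four_pow_pos a
    have hEqN : 4 * (h k + 2)^2 = 9 * (k + 1) := hiff.mpr ⟨a, ha, by clear hiff hk; omega⟩
    have hR : (4:ℝ) * ((h k : ℝ) + 2)^2 = 9 * ((k:ℝ) + 1) := by exact_mod_cast hEqN
    linarith
end

section
/- For every odd natural number k ≥ 1, (n₃(k)+1)² ≤ 1 + (3/2)(k−1), i.e. n₃(k) ≤ √((3k−1)/2) − 1, with equality if and only if k = 1 + 2·(4^a−1)/3 for some a ≥ 0, where n₃(k) = Σ_{i≥0} β_{2i+1} 2^i is built from the binary digits of k. -/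
/-- `n₃ k = Σ_{i≥0} β_{2i+1} 2^i` from the binary digits of `k`. -/
def n3 (k : ℕ) : ℕ := ∑ i ∈ Finset.range (k + 1), if k.testBit (2 * i + 1) then 2 ^ i else 0

/-- `n₅ k = Σ_{i≥0} β_{2i+2} 2^i` from the binary digits of `k`. -/
def n5 (k : ℕ) : ℕ := ∑ i ∈ Finset.range (k + 1), if k.testBit (2 * i + 2) then 2 ^ i else 0

/-- the corresponding value with odd bits placed at positions `2i+1`. -/
def m3 (k : ℕ) : ℕ := ∑ i ∈ Finset.range (k + 1), if k.testBit (2 * i + 1) then 4 ^ i else 0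

lemma testBit_big (k i : ℕ) (h : k ≤ i) : k.testBit (2 * i + 1) = false := by
  apply Nat.testBit_eq_false_of_lt
  calc k < 2 ^ k := Nat.lt_two_pow_self
  _ ≤ 2 ^ (2 * i + 1) := Nat.pow_le_pow_right (by norm_num) (by omega)

lemma n3_eq (k N : ℕ) (h : k + 1 ≤ N) :
    n3 k = ∑ i ∈ Finset.range N, if k.testBit (2 * i + 1) then 2 ^ i else 0 := by
  apply Finset.sum_subset (Finset.range_subset_range.2 h)
  intro i _ hi
  simp only [Finset.mem_range, not_lt] at hi
  rw [testBit_big k i (by omega)]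
  simp

lemma m3_eq (k N : ℕ) (h : k + 1 ≤ N) :
    m3 k = ∑ i ∈ Finset.range N, if k.testBit (2 * i + 1) then 4 ^ i else 0 := by
  apply Finset.sum_subset (Finset.range_subset_range.2 h)
  intro i _ hi
  simp only [Finset.mem_range, not_lt] at hi
  rw [testBit_big k i (by omega)]
  simp

lemma testBit_shift (k i : ℕ) : (k / 4).testBit (2 * i + 1) = k.testBit (2 * (i + 1) + 1) := by
  have h : 2 * (i + 1) + 1 = (2 * i + 1) + 2 := by omega
  rw [h, Nat.testBit_eq_decide_div_mod_eq, Nat.testBit_eq_decide_div_mod_eq, Nat.div_div_eq_div_mul]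
  have h2 : 4 * 2 ^ (2 * i + 1) = 2 ^ (2 * i + 1 + 2) := by rw [pow_add]; ring
  rw [h2]

lemma bit1_eq (k : ℕ) : (if k.testBit (0 + 1) then 1 else 0) = k / 2 % 2 := by
  norm_num
  rw [Nat.testBit_eq_decide_div_mod_eq]
  simp only [pow_one, decide_eq_true_eq]
  split <;> omega

lemma n3_rec (k : ℕ) : n3 k = k / 2 % 2 + 2 * n3 (k / 4) := by
  rcases Nat.eq_zero_or_pos k with rfl | hk
  · decide
  have e1 : n3 k = ∑ i ∈ Finset.range (k + 1),
      (if k.testBit (2 * i + 1) then 2 ^ i else 0) := rfl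
  rw [e1, Finset.sum_range_succ', n3_eq (k / 4) k (by omega), Finset.mul_sum,
    mul_zero]
  simp only [pow_zero]
  rw [bit1_eq, add_comm]
  congr 1
  apply Finset.sum_congr rfl
  intro i _
  rw [testBit_shift]
  split <;> ring

lemma m3_rec (k : ℕ) : m3 k = k / 2 % 2 + 4 * m3 (k / 4) := by
  rcases Nat.eq_zero_or_pos k with rfl | hk
  · decide
  have e1 : m3 k = ∑ i ∈ Finset.range (k + 1),
      (if k.testBit (2 * i + 1) then 4 ^ i else 0) := rfl
  rw [e1, Finset.sum_range_succ', m3_eq (k / 4) k (by omega), Finset.mul_sum,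
    mul_zero]
  simp only [pow_zero]
  rw [bit1_eq, add_comm]
  congr 1
  apply Finset.sum_congr rfl
  intro i _
  rw [testBit_shift]
  split <;> ring

/-- Master lemma by strong induction. -/
lemma master (k : ℕ) :
    (n3 k) ^ 2 + 2 * n3 k ≤ 3 * m3 k ∧ 2 * m3 k ≤ k ∧
      (((n3 k) ^ 2 + 2 * n3 k = 3 * m3 k ∧ 2 * m3 k = k) ↔ ∃ a, 3 * k = 2 * (4 ^ a - 1)) := by
  induction k using Nat.strong_induction_on with
  | _ k IH =>
  rcases Nat.eq_zero_or_pos k with rfl | hk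
  · refine ⟨by simp [n3, m3], by simp [m3], ?_⟩
    constructor
    · intro _; exact ⟨0, by decide⟩
    · intro _; simp [n3, m3]
  have h4 : k / 4 < k := Nat.div_lt_self hk (by norm_num)
  obtain ⟨ih1, ih2, ih3⟩ := IH (k / 4) h4
  set n' := n3 (k / 4) with hn'
  set m' := m3 (k / 4) with hm'
  set b := k / 2 % 2 with hb
  have hrn : n3 k = b + 2 * n' := n3_rec k
  have hrm : m3 k = b + 4 * m' := m3_rec k
  have hble : b ≤ 1 := by omega
  have hb01 : b = 0 ∨ b = 1 := by omega
  have key1 : (n3 k) ^ 2 + 2 * n3 k ≤ 3 * m3 k := by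
    rw [hrn, hrm]
    rcases hb01 with h | h <;> rw [h]
    · have hsq : (0 + 2 * n') ^ 2 = 4 * n' ^ 2 := by ring
      omega
    · have hsq : (1 + 2 * n') ^ 2 = 4 * n' ^ 2 + 4 * n' + 1 := by ring
      omega
  have hbk : 2 * b ≤ k % 4 := by omega
  have key2 : 2 * m3 k ≤ k := by rw [hrm]; omega
  refine ⟨key1, key2, ?_⟩
  constructor
  · rintro ⟨he1, he2⟩
    rw [hrn, hrm] at he1
    rw [hrm] at he2
    have hq2 : 2 * m' = k / 4 ∧ k % 4 = 2 * b := by omega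
    rcases hb01 with hb0 | hb1
    · rw [hb0] at he1
      have hsq : (0 + 2 * n') ^ 2 = 4 * n' ^ 2 := by ring
      have hn0 : n' = 0 := by omega
      have hx : n' ^ 2 = 0 := by simp [hn0]
      have hm0 : m' = 0 := by omega
      exfalso; omega
    · rw [hb1] at he1
      have hsq : (1 + 2 * n') ^ 2 = 4 * n' ^ 2 + 4 * n' + 1 := by ring
      have hq1 : n' ^ 2 + 2 * n' = 3 * m' := by omega
      obtain ⟨a, ha⟩ := ih3.1 ⟨hq1, hq2.1⟩
      refine ⟨a + 1, ?_⟩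
      have h1 : (1:ℕ) ≤ 4 ^ a := Nat.one_le_pow _ _ (by norm_num)
      have hp : 4 ^ (a + 1) = 4 * 4 ^ a := by ring
      omega
  · rintro ⟨a, ha⟩
    rcases a with _ | c
    · simp at ha; omega
    have h1 : (1:ℕ) ≤ 4 ^ c := Nat.one_le_pow _ _ (by norm_num)
    have hpow : 4 ^ (c + 1) = 4 * 4 ^ c := by ring
    have hk' : 3 * (k / 4) = 2 * (4 ^ c - 1) ∧ k % 4 = 2 := by omega
    have hb1 : b = 1 := by omega
    obtain ⟨he1', he2'⟩ := ih3.2 ⟨c, hk'.1⟩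
    constructor
    · rw [hrn, hrm, hb1]
      have hsq : (1 + 2 * n') ^ 2 = 4 * n' ^ 2 + 4 * n' + 1 := by ring
      omega
    · rw [hrm]; omega

lemma n3_succ_even (m : ℕ) : n3 (2 * m + 1) = n3 (2 * m) := by
  rw [n3_rec (2 * m + 1), n3_rec (2 * m)]
  have h1 : (2 * m + 1) / 2 = m := by omega
  have h2 : (2 * m + 1) / 4 = 2 * m / 4 := by omega
  rw [h1, h2]
  congr 1
  omega

lemma pow4mod3 (a : ℕ) : 3 ∣ 4 ^ a - 1 := by
  have h : (4:ℕ) ^ a % 3 = 1 := by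
    rw [Nat.pow_mod]; norm_num
  have h1 : (1:ℕ) ≤ 4 ^ a := Nat.one_le_pow _ _ (by norm_num)
  omega

theorem n3_bound (k : ℕ) (hk : Odd k) (h1 : 1 ≤ k) :
    ((n3 k : ℝ) + 1) ^ 2 ≤ 1 + (3 / 2) * ((k : ℝ) - 1) ∧
    (((n3 k : ℝ) + 1) ^ 2 = 1 + (3 / 2) * ((k : ℝ) - 1) ↔
      ∃ a : ℕ, k = 1 + 2 * ((4 ^ a - 1) / 3)) := by
  obtain ⟨m, rfl⟩ := hk
  have hn : n3 (2 * m + 1) = n3 (2 * m) := n3_succ_even m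
  obtain ⟨hle, hle2, hiff⟩ := master (2 * m)
  set n := n3 (2 * m) with hdefn
  have hcast : ((2 * m + 1 : ℕ) : ℝ) - 1 = 2 * (m : ℝ) := by push_cast; ring
  have hnat : 2 * (n ^ 2 + 2 * n) ≤ 3 * (2 * m) := by omega
  constructor
  · rw [hn, hcast]
    have hr : (2 * ((n:ℝ) ^ 2 + 2 * n)) ≤ 3 * (2 * m) := by exact_mod_cast hnat
    nlinarith [hr]
  · rw [hn, hcast]
    constructor
    · intro heq
      have hnat2 : 2 * (n ^ 2 + 2 * n) = 3 * (2 * m) := by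
        have hr : (2 * ((n:ℝ) ^ 2 + 2 * n)) = 3 * (2 * m) := by nlinarith [heq]
        exact_mod_cast hr
      have heqs : n ^ 2 + 2 * n = 3 * m3 (2 * m) ∧ 2 * m3 (2 * m) = 2 * m := by omega
      obtain ⟨a, ha⟩ := hiff.1 heqs
      refine ⟨a, ?_⟩
      have h1' : (1:ℕ) ≤ 4 ^ a := Nat.one_le_pow _ _ (by norm_num)
      have h3 := pow4mod3 a
      omega
    · rintro ⟨a, ha⟩
      have h1' : (1:ℕ) ≤ 4 ^ a := Nat.one_le_pow _ _ (by norm_num)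
      have h3 := pow4mod3 a
      have hm : 3 * (2 * m) = 2 * (4 ^ a - 1) := by omega
      have heqs := hiff.2 ⟨a, hm⟩
      have hnat2 : 2 * (n ^ 2 + 2 * n) = 3 * (2 * m) := by omega
      have hr : (2 * ((n:ℝ) ^ 2 + 2 * n)) = 3 * (2 * m) := by exact_mod_cast hnat2
      nlinarith [hr]
end

section
/- For every odd natural number k ≥ 1, (n₅(k)+1)² ≤ (3k+1)/4, i.e. n₅(k) ≤ √((3k+1)/4) − 1, with equality if and only if k = (4^a − 1)/3 for some a ≥ 1, where n₅(k) = Σ_{i≥0} β_{2i+2} 2^i is built from the binary digits of k. -/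
/-- even-bit extraction -/
def Ebits (q : ℕ) : ℕ := ∑ i ∈ Finset.range (q + 1), if q.testBit (2 * i) then 2 ^ i else 0

lemma testBit_false_of_le {q i : ℕ} (h : q ≤ i) : q.testBit (2 * i) = false := by
  apply Nat.testBit_lt_two_pow
  calc q ≤ i := h
    _ < 2 ^ i := Nat.lt_two_pow_self (n := i)
    _ ≤ 2 ^ (2 * i) := Nat.pow_le_pow_right (by norm_num) (by omega)

lemma Ebits_eq_sum {q n : ℕ} (h : q ≤ n) :
    ∑ i ∈ Finset.range (n + 1), (if q.testBit (2 * i) then 2 ^ i else 0) = Ebits q := by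
  rw [Ebits]
  symm
  apply Finset.sum_subset (Finset.range_subset_range.2 (by omega))
  intro i _ hi
  simp only [Finset.mem_range, not_lt] at hi
  rw [testBit_false_of_le (by omega)]
  simp

lemma Ebits_rec (q : ℕ) : Ebits q = q % 2 + 2 * Ebits (q / 4) := by
  rcases Nat.eq_zero_or_pos q with rfl | h
  · simp [Ebits]
  rw [Ebits, Finset.sum_range_succ']
  have h0 : (if q.testBit (2 * 0) then 2 ^ 0 else 0) = q % 2 := by
    rw [show 2 * 0 = 0 from rfl, Nat.testBit_zero]
    rcases Nat.mod_two_eq_zero_or_one q with h2 | h2 <;> simp [h2]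
  have hterm : ∀ i, (if q.testBit (2 * (i + 1)) then 2 ^ (i + 1) else 0)
      = 2 * (if (q / 4).testBit (2 * i) then 2 ^ i else 0) := by
    intro i
    have hs : q.testBit (2 * (i + 1)) = (q / 4).testBit (2 * i) := by
      rw [show 2 * (i + 1) = (2 * i + 1) + 1 from by ring, Nat.testBit_add_one,
        Nat.testBit_add_one, Nat.div_div_eq_div_mul]
    rw [hs]
    split <;> ring
  rw [Finset.sum_congr rfl (fun i _ => hterm i), ← Finset.mul_sum, h0]
  obtain ⟨m, rfl⟩ : ∃ m, q = m + 1 := ⟨q - 1, by omega⟩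
  rw [Ebits_eq_sum (show (m + 1) / 4 ≤ m from by omega)]
  ring

lemma n5_eq_Ebits (k : ℕ) : n5 k = Ebits (k / 4) := by
  rw [n5]
  have hs : ∀ i : ℕ, k.testBit (2 * i + 2) = (k / 4).testBit (2 * i) := by
    intro i
    rw [show 2 * i + 2 = (2 * i + 1) + 1 from rfl, Nat.testBit_add_one,
      Nat.testBit_add_one, Nat.div_div_eq_div_mul]
  simp_rw [hs]
  exact Ebits_eq_sum (by omega)

lemma Ebits_main (q : ℕ) :
    (Ebits q + 1) ^ 2 ≤ 3 * q + 1 ∧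
    ((Ebits q + 1) ^ 2 = 3 * q + 1 ↔ ∃ a : ℕ, 3 * q + 1 = 4 ^ a) := by
  induction q using Nat.strong_induction_on with
  | _ q ih =>
  rcases Nat.eq_zero_or_pos q with rfl | hq
  · refine ⟨by simp [Ebits], ?_⟩
    constructor
    · intro _; exact ⟨0, by norm_num⟩
    · intro _; simp [Ebits]
  · obtain ⟨hle, hiff⟩ := ih (q / 4) (by omega)
    have hrec : Ebits q = q % 4 % 2 + 2 * Ebits (q / 4) := by
      rw [Ebits_rec q, Nat.mod_mod_of_dvd q (by norm_num : (2:ℕ) ∣ 4)]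
    set p := q / 4 with hp
    set e := Ebits p with he
    set s := q % 4 with hs
    have hq4 : q = 4 * p + s := by omega
    have hslt : s < 4 := by omega
    have hsq : (e + 1) ^ 2 = e * e + 2 * e + 1 := by ring
    rcases Nat.mod_two_eq_zero_or_one s with hspar | hspar
    · -- s even; E q = 2e
      have hE : Ebits q = 2 * e := by omega
      have hEsq : (Ebits q + 1) ^ 2 = 4 * (e * e) + 4 * e + 1 := by rw [hE]; ring
      constructor
      · -- 4e² + 8e ≤ 12p, want 4e²+4e+1 ≤ 12p+3s+1
        omega
      · constructor
        · intro heqq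
          exfalso
          -- 4e²+4e = 12p+3s, and e²+2e ≤ 3p → 3s+4e ≤ 0 → s=e=0, then p=0, q=0
          have hs0 : s = 0 ∧ e = 0 := by omega
          obtain ⟨h1, h2⟩ := hs0
          have : e * e = 0 := by rw [h2]
          omega
        · rintro ⟨a, ha⟩
          exfalso
          -- 3q+1 = 4^a with q ≡ s mod 4, s even, q ≥ 1 → 3q+1 ≥ 4 so a ≥ 1 → 4 ∣ 3q+1
          rcases a with _ | b
          · simp at ha; omega
          · obtain ⟨c, hc⟩ : ∃ c, (4:ℕ) ^ (b+1) = 4 * c := ⟨4 ^ b, by ring⟩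
            omega
    · -- s odd; E q = 2e + 1
      have hE : Ebits q = 2 * e + 1 := by omega
      have hEsq : (Ebits q + 1) ^ 2 = 4 * ((e + 1) ^ 2) := by rw [hE]; ring
      constructor
      · omega
      · constructor
        · intro heqq
          -- 4(e+1)² = 12p + 3s + 1; mod 4 forces s = 1
          have hs1 : s = 1 := by omega
          have hpe : (e + 1) ^ 2 = 3 * p + 1 := by omega
          obtain ⟨a, ha⟩ := hiff.1 hpe
          exact ⟨a + 1, by rw [pow_succ]; omega⟩
        · rintro ⟨a, ha⟩
          rcases a with _ | b
          · simp at ha; omega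
          · have hc : (4:ℕ) ^ (b + 1) = 4 * 4 ^ b := by rw [pow_succ]; ring
            -- 3q + 1 = 4 * 4^b, q = 4p + s, s odd → s = 1 and 3p+1 = 4^b
            have hs1 : s = 1 := by omega
            have hpb : 3 * p + 1 = 4 ^ b := by omega
            have := hiff.2 ⟨b, hpb⟩
            omega

lemma three_dvd_pow4_sub_one (a : ℕ) : 3 * ((4 ^ a - 1) / 3) = 4 ^ a - 1 := by
  apply Nat.mul_div_cancel'
  induction a with
  | zero => simp
  | succ b ihb =>
    have h1 : (1:ℕ) ≤ 4 ^ b := Nat.one_le_pow _ _ (by norm_num)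
    have : 4 ^ (b + 1) - 1 = 4 * (4 ^ b - 1) + 3 := by rw [pow_succ]; omega
    rw [this]
    omega

theorem n5_bound (k : ℕ) (hk : Odd k) (h1 : 1 ≤ k) :
    ((n5 k : ℝ) + 1) ^ 2 ≤ (3 * (k : ℝ) + 1) / 4 ∧
    (((n5 k : ℝ) + 1) ^ 2 = (3 * (k : ℝ) + 1) / 4 ↔
      ∃ a : ℕ, 1 ≤ a ∧ k = (4 ^ a - 1) / 3) := by
  obtain ⟨hle, hiff⟩ := Ebits_main (k / 4)
  have hE := n5_eq_Ebits k
  have hodd : k % 2 = 1 := Nat.odd_iff.1 hk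
  have hs : k % 4 = 1 ∨ k % 4 = 3 := by omega
  constructor
  · rw [le_div_iff₀ (by norm_num : (0:ℝ) < 4)]
    have hnat : ((n5 k) + 1) ^ 2 * 4 ≤ 3 * k + 1 := by
      rw [hE]
      omega
    calc ((n5 k : ℝ) + 1) ^ 2 * 4 = (((n5 k + 1) ^ 2 * 4 : ℕ) : ℝ) := by push_cast; ring
      _ ≤ ((3 * k + 1 : ℕ) : ℝ) := by exact_mod_cast hnat
      _ = 3 * (k : ℝ) + 1 := by push_cast; ring
  · rw [eq_div_iff (by norm_num : (4:ℝ) ≠ 0)]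
    have hcast : ((n5 k : ℝ) + 1) ^ 2 * 4 = 3 * (k : ℝ) + 1 ↔
        ((n5 k) + 1) ^ 2 * 4 = 3 * k + 1 := by
      constructor
      · intro h; exact_mod_cast h
      · intro h; exact_mod_cast congrArg (fun n : ℕ => (n : ℝ)) h
    rw [hcast]
    constructor
    · intro h
      -- 4 * (E+1)^2 = 12(k/4) + 3(k%4) + 1, so k%4 = 1 and (E+1)^2 = 3(k/4)+1
      rw [hE] at h
      have hs1 : k % 4 = 1 := by omega
      have hpe : (Ebits (k / 4) + 1) ^ 2 = 3 * (k / 4) + 1 := by omega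
      obtain ⟨a, ha⟩ := hiff.1 hpe
      refine ⟨a + 1, by omega, ?_⟩
      have h4 : (4:ℕ) ^ (a + 1) = 4 * 4 ^ a := by rw [pow_succ]; ring
      have hk4 : 3 * k + 1 = 4 ^ (a + 1) := by omega
      omega
    · rintro ⟨a, ha1, hka⟩
      have hdvd := three_dvd_pow4_sub_one a
      have h1le : (1:ℕ) ≤ 4 ^ a := Nat.one_le_pow _ _ (by norm_num)
      have hk3 : 3 * k + 1 = 4 ^ a := by omega
      obtain ⟨b, rfl⟩ : ∃ b, a = b + 1 := ⟨a - 1, by omega⟩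
      have h4 : (4:ℕ) ^ (b + 1) = 4 * 4 ^ b := by rw [pow_succ]; ring
      have hs1 : k % 4 = 1 := by omega
      have hpb : 3 * (k / 4) + 1 = 4 ^ b := by omega
      have hpe := hiff.2 ⟨b, hpb⟩
      rw [hE]
      omega
end

section
/- Let Δ = Σ_{m≥0} q^{(2m+1)²} ∈ F₂[[q]] and, for an odd prime p, define T_p on F₂[[q]] by (T_p f)(q) = Σ_n γ_n q^n where γ_n = c_{pn} if p ∤ n and γ_n = c_{pn} + c_{n/p} if p | n (f = Σ c_n q^n). Then T_p Δ = 0 for every odd prime p. -/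
open Classical in
/-- The reduction mod 2 of the Δ series: `Δ = Σ_{m≥0} q^{(2m+1)²}` in `F₂[[q]]`. -/
noncomputable def Delta : PowerSeries (ZMod 2) :=
  PowerSeries.mk fun n => if ∃ m : ℕ, n = (2 * m + 1) ^ 2 then 1 else 0

/-- The mod 2 Hecke operator `T_p` on `F₂[[q]]`. -/
noncomputable def heckeT (p : ℕ) (f : PowerSeries (ZMod 2)) : PowerSeries (ZMod 2) :=
  PowerSeries.mk fun n =>
    PowerSeries.coeff (p * n) f +
      if p ∣ n then PowerSeries.coeff (n / p) f else 0

theorem heckeT_Delta_eq_zero (p : ℕ) (hp : p.Prime) (hodd : Odd p) :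
    heckeT p Delta = 0 := by
  ext n
  simp only [heckeT, Delta, PowerSeries.coeff_mk, map_zero]
  by_cases hdvd : p ∣ n
  · obtain ⟨k, rfl⟩ := hdvd
    rw [if_pos (Dvd.intro k rfl)]
    have h1 : p * (p * k) = p ^ 2 * k := by ring
    have h2 : p * k / p = k := Nat.mul_div_cancel_left _ hp.pos
    rw [h1, h2]
    have key : (∃ m, p ^ 2 * k = (2 * m + 1) ^ 2) ↔ (∃ m, k = (2 * m + 1) ^ 2) := by
      constructor
      · rintro ⟨m, hm⟩
        have hpd : p ∣ 2 * m + 1 :=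
          hp.dvd_of_dvd_pow (n := 2) ⟨p * k, by rw [← hm]; ring⟩
        obtain ⟨s, hs⟩ := hpd
        have hk : k = s ^ 2 := by
          have h3 : p ^ 2 * k = p ^ 2 * s ^ 2 := by rw [hm, hs]; ring
          exact Nat.eq_of_mul_eq_mul_left (by have := hp.pos; positivity) h3
        have hsodd : Odd s := by
          have : Odd (p * s) := hs ▸ odd_two_mul_add_one m
          exact (Nat.odd_mul.mp this).2
        obtain ⟨t, ht⟩ := hsodd
        exact ⟨t, by rw [hk, ht]⟩
      · rintro ⟨m, hm⟩
        obtain ⟨j, hj⟩ := hodd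
        exact ⟨2 * j * m + j + m, by rw [hm, hj]; ring⟩
    by_cases h : ∃ m, k = (2 * m + 1) ^ 2
    · rw [if_pos (key.mpr h), if_pos h]; decide
    · rw [if_neg (fun hc => h (key.mp hc)), if_neg h]; decide
  · rw [if_neg hdvd, add_zero, if_neg]
    rintro ⟨m, hm⟩
    apply hdvd
    have hpd : p ∣ 2 * m + 1 := hp.dvd_of_dvd_pow (n := 2) ⟨n, hm.symm⟩
    obtain ⟨s, hs⟩ := hpd
    have h3 : p * n = p * (p * s ^ 2) := by rw [hm, hs]; ring
    exact ⟨s ^ 2, Nat.eq_of_mul_eq_mul_left hp.pos h3⟩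
end

section
/- Let Δ = Σ_{m≥0} q^{(2m+1)²} ∈ F₂[[q]] and T_p the mod-2 Hecke operator. If p is a prime with p ≡ 3 (mod 8), then T_p(Δ³) = Δ; if p is an odd prime with p ≢ 3 (mod 8), then T_p(Δ³) = 0. -/
set_option maxHeartbeats 1600000

namespace HeckeDelta

local notation "R2" => Zsqrtd (-2)

noncomputable instance : Div R2 :=
  ⟨fun x y =>
    let n := ((Zsqrtd.norm y : ℚ))⁻¹
    let c := star y
    ⟨round (((x * c).re : ℚ) * n), round (((x * c).im : ℚ) * n)⟩⟩

theorem div_def (x y : R2) :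
    x / y = ⟨round (((x * star y).re : ℚ) / (Zsqrtd.norm y : ℚ)),
      round (((x * star y).im : ℚ) / (Zsqrtd.norm y : ℚ))⟩ := by
  show Zsqrtd.mk _ _ = _
  simp [div_eq_mul_inv]

noncomputable instance : Mod R2 :=
  ⟨fun x y => x - y * (x / y)⟩

theorem mod_def (x y : R2) : x % y = x - y * (x / y) := rfl

theorem norm_mod_lt (x : R2) {y : R2} (hy : y ≠ 0) : (x % y).norm < y.norm := by
  have hn : 0 < Zsqrtd.norm y := by
    rcases lt_or_eq_of_le (Zsqrtd.norm_nonneg (by norm_num) y) with h | h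
    · exact h
    · exact absurd ((Zsqrtd.norm_eq_zero_iff (by norm_num) y).1 h.symm) hy
  set n : ℤ := Zsqrtd.norm y with hndef
  have hnQ : (0:ℚ) < (n:ℚ) := by exact_mod_cast hn
  set a : ℤ := (x * star y).re with ha
  set b : ℤ := (x * star y).im with hb
  set q1 : ℤ := round ((a : ℚ) / (n : ℚ)) with hq1
  set q2 : ℤ := round ((b : ℚ) / (n : ℚ)) with hq2
  have habs : ∀ c : ℤ, |(c : ℚ) - n * round ((c:ℚ)/(n:ℚ))| ≤ n / 2 := by
    intro c
    have h := abs_sub_round ((c : ℚ) / (n : ℚ))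
    have key : ((c:ℚ) - n * round ((c:ℚ)/(n:ℚ))) = (n:ℚ) * ((c:ℚ)/n - round ((c:ℚ)/(n:ℚ))) := by
      field_simp
    rw [key, abs_mul, abs_of_pos hnQ]
    calc (n:ℚ) * |(c:ℚ)/n - round ((c:ℚ)/(n:ℚ))| ≤ (n:ℚ) * (1/2) :=
          mul_le_mul_of_nonneg_left h hnQ.le
      _ = n / 2 := by ring
  have habs1 := habs a
  have habs2 := habs b
  rw [← hq1] at habs1
  rw [← hq2] at habs2
  -- squared bounds over ℚ, transferred to ℤ
  have hsq1 : ((a - n * q1 : ℤ) : ℚ)^2 ≤ (n:ℚ)^2 / 4 := by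
    push_cast
    calc ((a:ℚ) - n*q1)^2 = |(a:ℚ) - n*q1|^2 := (sq_abs _).symm
      _ ≤ ((n:ℚ)/2)^2 := by
          apply pow_le_pow_left₀ (abs_nonneg _) habs1
      _ = (n:ℚ)^2/4 := by ring
  have hsq2 : ((b - n * q2 : ℤ) : ℚ)^2 ≤ (n:ℚ)^2 / 4 := by
    push_cast
    calc ((b:ℚ) - n*q2)^2 = |(b:ℚ) - n*q2|^2 := (sq_abs _).symm
      _ ≤ ((n:ℚ)/2)^2 := by
          apply pow_le_pow_left₀ (abs_nonneg _) habs2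
      _ = (n:ℚ)^2/4 := by ring
  have hkey : (a - n*q1)^2 + 2*(b - n*q2)^2 < n^2 := by
    have : ((a - n*q1 : ℤ):ℚ)^2 + 2*((b - n*q2 : ℤ):ℚ)^2 < ((n:ℤ):ℚ)^2 := by
      have h4 : (0:ℚ) < (n:ℚ)^2 := by positivity
      nlinarith [hsq1, hsq2]
    exact_mod_cast this
  -- identity: n * norm (x % y) = norm (w - n * q)
  have hq : x / y = (⟨q1, q2⟩ : R2) := div_def x y
  have hid : (n : R2) * (x % y) = y * (x * star y - (n : R2) * (⟨q1, q2⟩ : R2)) := by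
    have hyn : (n : R2) = y * star y := by
      rw [hndef, Zsqrtd.norm_eq_mul_conj]
    rw [mod_def, hq, hyn]
    ring
  have hnormid : n^2 * (x % y).norm = n * (x * star y - (n : R2) * (⟨q1, q2⟩ : R2)).norm := by
    have := congrArg Zsqrtd.norm hid
    rw [Zsqrtd.norm_mul, Zsqrtd.norm_mul, Zsqrtd.norm_intCast] at this
    rw [← hndef] at this
    calc n^2 * (x % y).norm = n * n * (x % y).norm := by ring
      _ = n * (x * star y - (n : R2) * (⟨q1, q2⟩ : R2)).norm := by rw [this]
  have hcomp : (x * star y - (n : R2) * (⟨q1, q2⟩ : R2)).norm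
      = (a - n*q1)^2 + 2*(b - n*q2)^2 := by
    rw [Zsqrtd.norm_def]
    have hre : (x * star y - (n : R2) * (⟨q1, q2⟩ : R2)).re = a - n * q1 := by
      simp [Zsqrtd.re_mul, Zsqrtd.im_mul, ← ha]
    have him : (x * star y - (n : R2) * (⟨q1, q2⟩ : R2)).im = b - n * q2 := by
      simp [Zsqrtd.re_mul, Zsqrtd.im_mul, ← hb]
    rw [hre, him]; ring
  have : n^2 * (x % y).norm < n^2 * n := by
    rw [hnormid, hcomp]
    calc n * ((a - n*q1)^2 + 2*(b - n*q2)^2) < n * n^2 :=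
          (mul_lt_mul_iff_right₀ hn).2 hkey
      _ = n^2 * n := by ring
  exact lt_of_mul_lt_mul_left this (by positivity)

end HeckeDelta

namespace HeckeDelta

local notation "R2" => Zsqrtd (-2)

theorem norm_pos' {y : R2} (hy : y ≠ 0) : 0 < y.norm := by
  rcases lt_or_eq_of_le (Zsqrtd.norm_nonneg (by norm_num) y) with h | h
  · exact h
  · exact absurd ((Zsqrtd.norm_eq_zero_iff (by norm_num) y).1 h.symm) hy

theorem natAbs_norm_mod_lt (x : R2) {y : R2} (hy : y ≠ 0) :
    (x % y).norm.natAbs < y.norm.natAbs := by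
  have h1 := norm_mod_lt x hy
  have h2 := Zsqrtd.norm_nonneg (show (-2:ℤ) ≤ 0 by norm_num) (x % y)
  omega

instance : Nontrivial R2 := ⟨⟨0, 1, by decide⟩⟩

theorem norm_le_norm_mul_left (x : R2) {y : R2} (hy : y ≠ 0) :
    (Zsqrtd.norm x).natAbs ≤ (Zsqrtd.norm (x * y)).natAbs := by
  rw [Zsqrtd.norm_mul, Int.natAbs_mul]
  have := norm_pos' hy
  have h2 : 1 ≤ y.norm.natAbs := by omega
  exact Nat.le_mul_of_pos_right _ (by omega)

noncomputable instance : EuclideanDomain R2 :=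
  { (inferInstance : CommRing R2), (inferInstance : Nontrivial R2) with
    quotient := (· / ·)
    remainder := (· % ·)
    quotient_zero := fun x => by
      simp [div_def, Zsqrtd.norm_zero]
      rfl
    quotient_mul_add_remainder_eq := fun a b => by change b * (a / b) + (a - b * (a / b)) = a; ring
    r := fun a b => a.norm.natAbs < b.norm.natAbs
    r_wellFounded := (measure (Int.natAbs ∘ Zsqrtd.norm)).wf
    remainder_lt := fun x y hy => natAbs_norm_mod_lt x hy
    mul_left_not_lt := fun a b hb0 => not_lt_of_ge <| norm_le_norm_mul_left a hb0 }

theorem exists_sq_add_two_sq (p : ℕ) (hp : p.Prime) (h8 : p % 8 = 1 ∨ p % 8 = 3) :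
    ∃ c d : ℤ, c ^ 2 + 2 * d ^ 2 = (p : ℤ) := by
  haveI : Fact p.Prime := ⟨hp⟩
  have hp2 : p ≠ 2 := by rintro rfl; omega
  obtain ⟨k0, hk0⟩ := (ZMod.exists_sq_eq_neg_two_iff (p := p) hp2).2 h8
  obtain ⟨k, hklt, rfl⟩ : ∃ (k' : ℕ) (_ : k' < p), (k' : ZMod p) = k0 :=
    ⟨k0.val, k0.val_lt, ZMod.natCast_zmod_val k0⟩
  have hpk : p ∣ k ^ 2 + 2 := by
    rw [← CharP.cast_eq_zero_iff (ZMod p) p]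
    push_cast
    rw [pow_two, ← hk0]
    ring
  -- p is not prime in R2
  have hpnp : ¬ Prime (p : R2) := by
    intro hpi
    have hkmul : ((k ^ 2 + 2 : ℕ) : R2) = ⟨(k:ℤ), 1⟩ * ⟨(k:ℤ), -1⟩ := by
      have hcast : ((k:ℕ) : R2) = ⟨(k:ℤ), 0⟩ := by ext <;> simp
      push_cast
      rw [pow_two, hcast]
      ext <;> simp [Zsqrtd.re_mul, Zsqrtd.im_mul]
    obtain ⟨y, hy⟩ := hpk
    have hpdvd : (p : R2) ∣ ⟨(k:ℤ), 1⟩ * ⟨(k:ℤ), -1⟩ := by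
      rw [← hkmul]
      exact ⟨(y : ℕ), by rw [← Nat.cast_mul, ← hy]⟩
    have him : ∀ c : ℤ, (p : R2) ∣ ⟨(k:ℤ), c⟩ → (p:ℤ) ∣ c := by
      rintro c ⟨z, hz⟩
      have : c = (p:ℤ) * z.im := by
        have := congrArg Zsqrtd.im hz
        simpa using this
      exact ⟨z.im, this⟩
    rcases hpi.2.2 _ _ hpdvd with h | h
    · have := him 1 h
      have := Int.le_of_dvd one_pos this
      have := hp.one_lt
      omega
    · have := him (-1) h
      have h1 : (p:ℤ) ∣ 1 := dvd_neg.mp this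
      have := Int.le_of_dvd one_pos h1
      have := hp.one_lt
      omega
  have hpni : ¬ Irreducible (p : R2) := fun h => hpnp h.prime
  have hpu : ¬IsUnit (p : R2) := by
    rw [← Zsqrtd.norm_eq_one_iff]
    rw [Zsqrtd.norm_natCast, Int.natAbs_mul]
    simp only [Int.natAbs_natCast]
    intro h
    have := hp.one_lt
    rcases Nat.eq_one_of_mul_eq_one_left h with h1
    omega
  have hab : ∃ a b : R2, (p : R2) = a * b ∧ ¬IsUnit a ∧ ¬IsUnit b := by
    simpa only [true_and, not_false_iff, exists_prop, irreducible_iff, hpu, not_forall,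
      not_or] using hpni
  obtain ⟨a, b, hpab, hau, hbu⟩ := hab
  have hnap : (Zsqrtd.norm a).natAbs = p := by
    have h1 : (Zsqrtd.norm a).natAbs * (Zsqrtd.norm b).natAbs = p * p := by
      rw [← Int.natAbs_mul, ← Zsqrtd.norm_mul, ← hpab, Zsqrtd.norm_natCast, Int.natAbs_mul]
      simp
    have h2 := (hp.mul_eq_prime_sq_iff
      (mt Zsqrtd.norm_eq_one_iff.1 hau) (mt Zsqrtd.norm_eq_one_iff.1 hbu)).1 (by rw [h1]; ring)
    exact h2.1
  refine ⟨a.re, a.im, ?_⟩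
  have hnn : 0 ≤ Zsqrtd.norm a := Zsqrtd.norm_nonneg (by norm_num) a
  have : Zsqrtd.norm a = (p : ℤ) := by
    rw [← Int.natAbs_of_nonneg hnn, hnap]
  rw [Zsqrtd.norm_def] at this
  linarith [this]

end HeckeDelta


open Classical

namespace HeckeDelta

noncomputable section

/-- Representations of `n` by the form `x² + 2y²`, all integer pairs. -/
def Rset (n : ℕ) : Finset (ℤ × ℤ) :=
  ((Finset.Icc (-(n:ℤ)) (n:ℤ)) ×ˢ (Finset.Icc (-(n:ℤ)) (n:ℤ))).filter
    fun z => z.1 ^ 2 + 2 * z.2 ^ 2 = (n : ℤ)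

lemma sq_le_bound {x n : ℤ} (h : x ^ 2 ≤ n) : -n ≤ x ∧ x ≤ n := by
  have h1 : 2 * x ≤ n + 1 := by nlinarith [sq_nonneg (x - 1)]
  have h2 : -(n + 1) ≤ 2 * x := by nlinarith [sq_nonneg (x + 1)]
  have h0 : 0 ≤ n := le_trans (sq_nonneg x) h
  omega

lemma mem_Rset {n : ℕ} {z : ℤ × ℤ} : z ∈ Rset n ↔ z.1 ^ 2 + 2 * z.2 ^ 2 = (n : ℤ) := by
  constructor
  · intro h
    exact (Finset.mem_filter.1 h).2
  · intro h
    refine Finset.mem_filter.2 ⟨Finset.mem_product.2 ⟨?_, ?_⟩, h⟩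
    · have hb : z.1 ^ 2 ≤ (n : ℤ) := by nlinarith [sq_nonneg z.2]
      have := sq_le_bound hb
      simp [Finset.mem_Icc, this.1, this.2]
    · have hb : z.2 ^ 2 ≤ (n : ℤ) := by nlinarith [sq_nonneg z.1, sq_nonneg z.2]
      have := sq_le_bound hb
      simp [Finset.mem_Icc, this.1, this.2]

/-- Representations with both coordinates positive. -/
def Pset (n : ℕ) : Finset (ℤ × ℤ) := (Rset n).filter fun z => 0 < z.1 ∧ 0 < z.2

lemma mem_Pset {n : ℕ} {z : ℤ × ℤ} :
    z ∈ Pset n ↔ z.1 ^ 2 + 2 * z.2 ^ 2 = (n : ℤ) ∧ 0 < z.1 ∧ 0 < z.2 := by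
  simp [Pset, Finset.mem_filter, mem_Rset]

def tR (n : ℕ) : ℕ := (Rset n).card
def sp (n : ℕ) : ℕ := (Pset n).card
def e (n : ℕ) : ℕ := if ∃ k : ℕ, k * k = n then 1 else 0

lemma structure_count {n : ℕ} (hn : n % 2 = 1) : tR n = 4 * sp n + 2 * e n := by
  classical
  -- x-coordinate is nonzero and in fact odd
  have hxodd : ∀ z : ℤ × ℤ, z ∈ Rset n → z.1 ≠ 0 := by
    intro z hz
    rw [mem_Rset] at hz
    intro h0
    rw [h0] at hz
    have : (n : ℤ) % 2 = 1 := by omega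
    omega
  set X := (Rset n).filter (fun z => 0 < z.1) with hX
  set Y := (Rset n).filter (fun z => z.1 < 0) with hY
  have hsplit : tR n = X.card + Y.card := by
    rw [tR, ← Finset.card_union_of_disjoint]
    · congr 1
      ext z
      simp only [hX, hY, Finset.mem_union, Finset.mem_filter]
      constructor
      · intro hz
        have := hxodd z hz
        rcases lt_trichotomy z.1 0 with h | h | h
        · exact Or.inr ⟨hz, h⟩
        · exact absurd h this
        · exact Or.inl ⟨hz, h⟩
      · rintro (⟨h, _⟩ | ⟨h, _⟩) <;> exact h
    · rw [Finset.disjoint_filter]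
      intro z _ h1
      omega
  have hYX : Y.card = X.card := by
    refine Finset.card_bij' (fun z _ => (-z.1, -z.2)) (fun z _ => (-z.1, -z.2)) ?_ ?_ ?_ ?_
    · intro z hz
      simp only [hY, Finset.mem_filter, mem_Rset] at hz
      simp only [hX, Finset.mem_filter, mem_Rset]
      exact ⟨by rw [← hz.1]; ring, by omega⟩
    · intro z hz
      simp only [hX, Finset.mem_filter, mem_Rset] at hz
      simp only [hY, Finset.mem_filter, mem_Rset]
      exact ⟨by rw [← hz.1]; ring, by omega⟩
    · intro z _; simp
    · intro z _; simp
  -- now split X by sign of y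
  set A := X.filter (fun z => 0 < z.2) with hA
  set B := X.filter (fun z => z.2 < 0) with hB
  set C := X.filter (fun z => z.2 = 0) with hC
  have hXsplit : X.card = A.card + B.card + C.card := by
    rw [← Finset.card_union_of_disjoint, ← Finset.card_union_of_disjoint]
    · congr 1
      ext z
      simp only [hA, hB, hC, Finset.mem_union, Finset.mem_filter]
      constructor
      · intro hz
        rcases lt_trichotomy z.2 0 with h | h | h
        · exact Or.inl (Or.inr ⟨hz, h⟩)
        · exact Or.inr ⟨hz, h⟩
        · exact Or.inl (Or.inl ⟨hz, h⟩)
      · rintro ((⟨h, _⟩ | ⟨h, _⟩) | ⟨h, _⟩) <;> exact h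
    · rw [Finset.disjoint_union_left]
      constructor <;> (rw [Finset.disjoint_filter]; intro z hz h1; omega)
    · rw [Finset.disjoint_filter]
      intro z _ h1
      omega
  have hApset : A = Pset n := by
    ext z
    simp only [hA, hX, Pset, Finset.mem_filter, and_assoc]
  have hBA : B.card = A.card := by
    refine Finset.card_bij' (fun z _ => (z.1, -z.2)) (fun z _ => (z.1, -z.2)) ?_ ?_ ?_ ?_
    · intro z hz
      simp only [hB, hX, hA, Finset.mem_filter, mem_Rset] at hz ⊢
      exact ⟨⟨by rw [← hz.1.1]; ring, hz.1.2⟩, by omega⟩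
    · intro z hz
      simp only [hA, hX, hB, Finset.mem_filter, mem_Rset] at hz ⊢
      exact ⟨⟨by rw [← hz.1.1]; ring, hz.1.2⟩, by omega⟩
    · intro z _; simp
    · intro z _; simp
  have hCcard : C.card = e n := by
    rw [e]
    split_ifs with hsq
    · obtain ⟨k, hk⟩ := hsq
      have hk1 : 1 ≤ k := by
        rcases Nat.eq_zero_or_pos k with h | h
        · subst h; omega
        · exact h
      have : C = {((k : ℤ), 0)} := by
        ext z
        simp only [hC, hX, Finset.mem_filter, mem_Rset, Finset.mem_singleton]
        constructor
        · rintro ⟨⟨hz, hzpos⟩, hz2⟩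
          rw [hz2] at hz
          have hkZ : ((k:ℤ)) * k = (n : ℤ) := by exact_mod_cast hk
          have hzz : z.1 ^ 2 = (k : ℤ) ^ 2 := by nlinarith [hz, hkZ]
          have : z.1 = (k : ℤ) := by
            have hkpos : (0:ℤ) < k := by exact_mod_cast hk1
            nlinarith [hzz, hzpos, hkpos]
          exact Prod.ext this hz2
        · rintro rfl
          have hkZ : ((k:ℤ)) * k = (n : ℤ) := by exact_mod_cast hk
          exact ⟨⟨by push_cast; nlinarith [hkZ], by show (0:ℤ) < (k:ℤ); exact_mod_cast hk1⟩, rfl⟩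
      rw [this]; simp
    · have : C = ∅ := by
        ext z
        simp only [hC, hX, Finset.mem_filter, mem_Rset, Finset.notMem_empty, iff_false]
        rintro ⟨⟨hz, hzpos⟩, hz2⟩
        rw [hz2] at hz
        apply hsq
        refine ⟨z.1.toNat, ?_⟩
        have : ((z.1.toNat : ℤ)) = z.1 := Int.toNat_of_nonneg hzpos.le
        have h2 : (z.1.toNat * z.1.toNat : ℤ) = (n : ℤ) := by
          rw [this]; nlinarith [hz]
        exact_mod_cast h2
      rw [this]; simp
  rw [hsplit, hYX, hXsplit, hBA, hApset, hCcard]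
  simp only [sp]
  ring

end

end HeckeDelta

namespace HeckeDelta

section Split

variable {p n : ℕ} {c d : ℤ}

/-- multiplication by `c + d√-2` on pairs -/
def mulc (c d : ℤ) (z : ℤ × ℤ) : ℤ × ℤ := (c * z.1 - 2 * d * z.2, c * z.2 + d * z.1)

lemma mulc_inj (hp : p.Prime) (hcd : c ^ 2 + 2 * d ^ 2 = (p : ℤ)) :
    Function.Injective (mulc c d) := by
  have hp0 : (p : ℤ) ≠ 0 := by exact_mod_cast hp.ne_zero
  intro z w h
  rw [Prod.ext_iff] at h
  obtain ⟨h1, h2⟩ := h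
  simp only [mulc] at h1 h2
  have e1 : (p : ℤ) * (z.1 - w.1) = 0 := by
    linear_combination c * h1 + 2 * d * h2 - (z.1 - w.1) * hcd
  have e2 : (p : ℤ) * (z.2 - w.2) = 0 := by
    linear_combination c * h2 - d * h1 - (z.2 - w.2) * hcd
  have hz1 : z.1 = w.1 := by
    rcases mul_eq_zero.1 e1 with h | h
    · exact absurd h hp0
    · linarith
  have hz2 : z.2 = w.2 := by
    rcases mul_eq_zero.1 e2 with h | h
    · exact absurd h hp0
    · linarith
  exact Prod.ext hz1 hz2

lemma mulc_mem (hcd : c ^ 2 + 2 * d ^ 2 = (p : ℤ)) {z : ℤ × ℤ} (hz : z ∈ Rset n) :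
    mulc c d z ∈ Rset (p * n) := by
  rw [mem_Rset] at hz ⊢
  simp only [mulc]
  push_cast
  linear_combination (z.1 ^ 2 + 2 * z.2 ^ 2) * hcd + (p : ℤ) * hz

lemma not_dvd_c (hp : p.Prime) (hpodd : p % 2 = 1) (hcd : c ^ 2 + 2 * d ^ 2 = (p : ℤ)) :
    ¬ (p : ℤ) ∣ c := by
  have hpP : Prime (p : ℤ) := Nat.prime_iff_prime_int.mp hp
  rintro ⟨c', rfl⟩
  have hpge : (2 : ℤ) ≤ (p : ℤ) := by exact_mod_cast hp.two_le
  have h2 : (p : ℤ) ∣ 2 * d ^ 2 := ⟨1 - p * c' ^ 2, by linear_combination hcd⟩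
  have h2' : ¬ (p : ℤ) ∣ 2 := by
    intro h
    have h1 : (p : ℤ) ≤ 2 := Int.le_of_dvd (by norm_num) h
    have h3 : p ≤ 2 := by exact_mod_cast h1
    have h4 := hp.two_le
    omega
  have hd : (p : ℤ) ∣ d := by
    rcases hpP.dvd_mul.1 h2 with h | h
    · exact absurd h h2'
    · exact hpP.dvd_of_dvd_pow h
  obtain ⟨d', rfl⟩ := hd
  have key : (p : ℤ) * (p * c' ^ 2 + 2 * p * d' ^ 2 - 1) = 0 := by linear_combination hcd
  have hc2 : (0:ℤ) ≤ c' ^ 2 := sq_nonneg _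
  have hd2 : (0:ℤ) ≤ d' ^ 2 := sq_nonneg _
  rcases mul_eq_zero.1 key with h | h
  · omega
  · have h1 : (p:ℤ) * c' ^ 2 + 2 * (p:ℤ) * d' ^ 2 = 1 := by linarith
    have hcle : 2 * c' ^ 2 ≤ (p:ℤ) * c' ^ 2 := by nlinarith [mul_nonneg (by linarith : (0:ℤ) ≤ (p:ℤ) - 2) hc2]
    have hdle : 4 * d' ^ 2 ≤ 2 * (p:ℤ) * d' ^ 2 := by nlinarith [mul_nonneg (by linarith : (0:ℤ) ≤ (p:ℤ) - 2) hd2]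
    have hc0 : c' ^ 2 = 0 := by nlinarith
    have hd0 : d' ^ 2 = 0 := by nlinarith
    rw [hc0, hd0] at h1
    simp at h1

lemma not_dvd_d (hp : p.Prime) (hpodd : p % 2 = 1) (hcd : c ^ 2 + 2 * d ^ 2 = (p : ℤ)) :
    ¬ (p : ℤ) ∣ d := by
  have hpP : Prime (p : ℤ) := Nat.prime_iff_prime_int.mp hp
  intro hd
  have h2 : (p : ℤ) ∣ c ^ 2 := by
    obtain ⟨d', rfl⟩ := hd
    exact ⟨1 - 2 * p * d' ^ 2, by linear_combination hcd⟩
  exact not_dvd_c hp hpodd hcd (hpP.dvd_of_dvd_pow h2)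

/-- every representation of `p*n` is in the image of `mulc c d` or `mulc c (-d)`. -/
lemma surj_split (hp : p.Prime) (hpodd : p % 2 = 1) (hcd : c ^ 2 + 2 * d ^ 2 = (p : ℤ))
    {z : ℤ × ℤ} (hz : z ∈ Rset (p * n)) :
    z ∈ (Rset n).image (mulc c d) ∪ (Rset n).image (mulc c (-d)) := by
  have hpP : Prime (p : ℤ) := Nat.prime_iff_prime_int.mp hp
  have hp0 : (p : ℤ) ≠ 0 := by exact_mod_cast hp.ne_zero
  have hp2 : ((p : ℤ) ^ 2) ≠ 0 := pow_ne_zero _ hp0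
  rw [mem_Rset] at hz
  have hz' : z.1 ^ 2 + 2 * z.2 ^ 2 = (p : ℤ) * n := by push_cast at hz; linarith [hz]
  have hkey : (p : ℤ) ∣ (z.2 * c - z.1 * d) * (z.2 * c + z.1 * d) :=
    ⟨z.2 ^ 2 - d ^ 2 * n, by linear_combination z.2 ^ 2 * hcd - d ^ 2 * hz'⟩
  have hpc := not_dvd_c hp hpodd hcd
  rcases hpP.dvd_mul.1 hkey with hside | hside
  · obtain ⟨y, hy⟩ := hside
    have hdx : (p : ℤ) ∣ c * (z.1 * c + 2 * z.2 * d) :=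
      ⟨z.1 + 2 * d * y, by linear_combination z.1 * hcd + 2 * d * hy⟩
    obtain ⟨x, hx⟩ : (p : ℤ) ∣ (z.1 * c + 2 * z.2 * d) := by
      rcases hpP.dvd_mul.1 hdx with h | h
      · exact absurd h hpc
      · exact h
    apply Finset.mem_union_left
    rw [Finset.mem_image]
    refine ⟨(x, y), ?_, ?_⟩
    · rw [mem_Rset]
      exact mul_left_cancel₀ hp2 (by
        linear_combination (-(z.1 * c + 2 * z.2 * d) - (p:ℤ) * x) * hx
          + (-2 * (z.2 * c - z.1 * d) - 2 * (p:ℤ) * y) * hy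
          + (z.1 ^ 2 + 2 * z.2 ^ 2) * hcd + (p : ℤ) * hz'
        : (p:ℤ)^2 * (x ^ 2 + 2 * y ^ 2) = (p:ℤ)^2 * (n:ℤ))
    · have h1 : c * x - 2 * d * y = z.1 :=
        mul_left_cancel₀ hp0 (by linear_combination z.1 * hcd - c * hx + 2 * d * hy
          : (p:ℤ) * (c * x - 2 * d * y) = (p:ℤ) * z.1)
      have h2 : c * y + d * x = z.2 :=
        mul_left_cancel₀ hp0 (by linear_combination z.2 * hcd - c * hy - d * hx
          : (p:ℤ) * (c * y + d * x) = (p:ℤ) * z.2)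
      simp only [mulc]
      exact Prod.ext h1 h2
  · obtain ⟨y, hy⟩ := hside
    have hdx : (p : ℤ) ∣ c * (z.1 * c - 2 * z.2 * d) :=
      ⟨z.1 - 2 * d * y, by linear_combination z.1 * hcd - 2 * d * hy⟩
    obtain ⟨x, hx⟩ : (p : ℤ) ∣ (z.1 * c - 2 * z.2 * d) := by
      rcases hpP.dvd_mul.1 hdx with h | h
      · exact absurd h hpc
      · exact h
    apply Finset.mem_union_right
    rw [Finset.mem_image]
    refine ⟨(x, y), ?_, ?_⟩
    · rw [mem_Rset]
      exact mul_left_cancel₀ hp2 (by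
        linear_combination (-(z.1 * c - 2 * z.2 * d) - (p:ℤ) * x) * hx
          + (-2 * (z.2 * c + z.1 * d) - 2 * (p:ℤ) * y) * hy
          + (z.1 ^ 2 + 2 * z.2 ^ 2) * hcd + (p : ℤ) * hz'
        : (p:ℤ)^2 * (x ^ 2 + 2 * y ^ 2) = (p:ℤ)^2 * (n:ℤ))
    · have h1 : c * x + 2 * d * y = z.1 :=
        mul_left_cancel₀ hp0 (by linear_combination z.1 * hcd - c * hx - 2 * d * hy
          : (p:ℤ) * (c * x + 2 * d * y) = (p:ℤ) * z.1)
      have h2 : c * y - d * x = z.2 :=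
        mul_left_cancel₀ hp0 (by linear_combination z.2 * hcd - c * hy + d * hx
          : (p:ℤ) * (c * y - d * x) = (p:ℤ) * z.2)
      simp only [mulc]
      refine Prod.ext ?_ ?_
      · show c * x - 2 * (-d) * y = z.1
        linear_combination h1
      · show c * y + (-d) * x = z.2
        linear_combination h2

lemma split_inter_mem (hp : p.Prime) (hpodd : p % 2 = 1) (hcd : c ^ 2 + 2 * d ^ 2 = (p : ℤ))
    {z : ℤ × ℤ} (hz : z ∈ (Rset n).image (mulc c d) ∩ (Rset n).image (mulc c (-d))) :
    ∃ w : ℤ × ℤ, z = ((p:ℤ) * w.1, (p:ℤ) * w.2) ∧ (p:ℤ) * (w.1 ^ 2 + 2 * w.2 ^ 2) = (n : ℤ) := by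
  have hpP : Prime (p : ℤ) := Nat.prime_iff_prime_int.mp hp
  have hp0 : (p : ℤ) ≠ 0 := by exact_mod_cast hp.ne_zero
  rw [Finset.mem_inter, Finset.mem_image, Finset.mem_image] at hz
  obtain ⟨⟨a, ha, hza⟩, ⟨b, hb, hzb⟩⟩ := hz
  rw [mem_Rset] at ha hb
  have hza1 : c * a.1 - 2 * d * a.2 = z.1 := congrArg Prod.fst hza
  have hza2 : c * a.2 + d * a.1 = z.2 := congrArg Prod.snd hza
  have hzb1 : c * b.1 - 2 * (-d) * b.2 = z.1 := congrArg Prod.fst hzb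
  have hzb2 : c * b.2 + (-d) * b.1 = z.2 := congrArg Prod.snd hzb
  have hA : z.2 * c - z.1 * d = (p:ℤ) * a.2 := by
    linear_combination a.2 * hcd - c * hza2 + d * hza1
  have hB : z.2 * c + z.1 * d = (p:ℤ) * b.2 := by
    linear_combination b.2 * hcd - c * hzb2 - d * hzb1
  have h2c : (p:ℤ) ∣ 2 * c * z.2 := ⟨a.2 + b.2, by linear_combination hA + hB⟩
  have h2d : (p:ℤ) ∣ 2 * d * z.1 := ⟨b.2 - a.2, by linear_combination hB - hA⟩
  have hp2' : ¬ (p : ℤ) ∣ 2 := by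
    intro h
    have h1 : (p : ℤ) ≤ 2 := Int.le_of_dvd (by norm_num) h
    have h3 : p ≤ 2 := by exact_mod_cast h1
    have h4 := hp.two_le
    omega
  have hz2 : (p:ℤ) ∣ z.2 := by
    rcases hpP.dvd_mul.1 h2c with h | h
    · rcases hpP.dvd_mul.1 h with h' | h'
      · exact absurd h' hp2'
      · exact absurd h' (not_dvd_c hp hpodd hcd)
    · exact h
  have hz1 : (p:ℤ) ∣ z.1 := by
    rcases hpP.dvd_mul.1 h2d with h | h
    · rcases hpP.dvd_mul.1 h with h' | h'
      · exact absurd h' hp2'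
      · exact absurd h' (not_dvd_d hp hpodd hcd)
    · exact h
  obtain ⟨w1, hw1⟩ := hz1
  obtain ⟨w2, hw2⟩ := hz2
  refine ⟨(w1, w2), by rw [← hw1, ← hw2], ?_⟩
  have hzz : z.1 ^ 2 + 2 * z.2 ^ 2 = (p:ℤ) * n := by
    have := mulc_mem (n := n) hcd ((mem_Rset).2 ha)
    rw [hza, mem_Rset] at this
    push_cast at this
    linarith [this]
  have : (p:ℤ) * ((p:ℤ) * (w1 ^ 2 + 2 * w2 ^ 2)) = (p:ℤ) * (n:ℤ) := by
    linear_combination (-z.1 - (p:ℤ) * w1) * hw1 + (-2 * z.2 - 2 * (p:ℤ) * w2) * hw2 + hzz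
  exact mul_left_cancel₀ hp0 this

lemma scale_mem {m : ℕ} {w : ℤ × ℤ} (hw : w ∈ Rset m) :
    ((p:ℤ) * w.1, (p:ℤ) * w.2) ∈ Rset (p * p * m) := by
  rw [mem_Rset] at hw ⊢
  push_cast
  linear_combination ((p:ℤ))^2 * hw

lemma scale_inj (hp : p.Prime) :
    Function.Injective (fun w : ℤ × ℤ => ((p:ℤ) * w.1, (p:ℤ) * w.2)) := by
  have hp0 : (p : ℤ) ≠ 0 := by exact_mod_cast hp.ne_zero
  intro z w h
  rw [Prod.ext_iff] at h
  obtain ⟨h1, h2⟩ := h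
  simp only at h1 h2
  exact Prod.ext (mul_left_cancel₀ hp0 h1) (mul_left_cancel₀ hp0 h2)

lemma split_count (hp : p.Prime) (hpodd : p % 2 = 1) (hcd : c ^ 2 + 2 * d ^ 2 = (p : ℤ)) :
    (p ∣ n → tR (p * n) + tR (n / p) = 2 * tR n) ∧ (¬ p ∣ n → tR (p * n) = 2 * tR n) := by
  classical
  have hp0 : (p : ℤ) ≠ 0 := by exact_mod_cast hp.ne_zero
  have hcd' : c ^ 2 + 2 * (-d) ^ 2 = (p : ℤ) := by linear_combination hcd
  set A := (Rset n).image (mulc c d) with hA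
  set B := (Rset n).image (mulc c (-d)) with hB
  have hAcard : A.card = tR n := Finset.card_image_of_injective _ (mulc_inj hp hcd)
  have hBcard : B.card = tR n := Finset.card_image_of_injective _ (mulc_inj hp hcd')
  have hUnion : A ∪ B = Rset (p * n) := by
    apply Finset.Subset.antisymm
    · intro z hz
      rcases Finset.mem_union.1 hz with h | h
      · obtain ⟨w, hw, rfl⟩ := Finset.mem_image.1 h
        exact mulc_mem hcd hw
      · obtain ⟨w, hw, rfl⟩ := Finset.mem_image.1 h
        exact mulc_mem hcd' hw
    · intro z hz
      exact surj_split hp hpodd hcd hz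
  have hcardsum : tR (p * n) + (A ∩ B).card = 2 * tR n := by
    have := Finset.card_union_add_card_inter A B
    rw [hUnion, hAcard, hBcard] at this
    rw [tR, this]
    ring
  constructor
  · intro hdvd
    have hnp : ((n / p : ℕ) : ℤ) * p = (n : ℤ) := by exact_mod_cast Nat.div_mul_cancel hdvd
    have hInter : A ∩ B = (Rset (n / p)).image (fun w : ℤ × ℤ => ((p:ℤ) * w.1, (p:ℤ) * w.2)) := by
      apply Finset.Subset.antisymm
      · intro z hz
        obtain ⟨w, hzw, hwn⟩ := split_inter_mem hp hpodd hcd hz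
        rw [Finset.mem_image]
        refine ⟨w, ?_, hzw.symm⟩
        rw [mem_Rset]
        apply mul_left_cancel₀ hp0
        rw [hwn, ← hnp]
        ring
      · intro z hz
        obtain ⟨w, hw, rfl⟩ := Finset.mem_image.1 hz
        rw [mem_Rset] at hw
        have hwn : w ∈ Rset (n / p) := (mem_Rset).2 hw
        have hg : mulc c (-d) w ∈ Rset n := by
          have := mulc_mem (n := n / p) hcd' hwn
          rwa [Nat.mul_div_cancel' hdvd] at this
        have hf : mulc c d w ∈ Rset n := by
          have := mulc_mem (n := n / p) hcd hwn
          rwa [Nat.mul_div_cancel' hdvd] at this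
        rw [Finset.mem_inter]
        constructor
        · rw [hA, Finset.mem_image]
          refine ⟨mulc c (-d) w, hg, ?_⟩
          simp only [mulc, Prod.mk.injEq]
          exact ⟨by linear_combination w.1 * hcd, by linear_combination w.2 * hcd⟩
        · rw [hB, Finset.mem_image]
          refine ⟨mulc c d w, hf, ?_⟩
          simp only [mulc, Prod.mk.injEq]
          exact ⟨by linear_combination w.1 * hcd, by linear_combination w.2 * hcd⟩
    have hIcard : (A ∩ B).card = tR (n / p) := by
      rw [hInter]
      exact Finset.card_image_of_injective _ (scale_inj hp)
    omega
  · intro hndvd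
    have hInter : A ∩ B = ∅ := by
      rw [Finset.eq_empty_iff_forall_notMem]
      intro z hz
      obtain ⟨w, hzw, hwn⟩ := split_inter_mem hp hpodd hcd hz
      apply hndvd
      have : (p : ℤ) ∣ (n : ℤ) := ⟨w.1 ^ 2 + 2 * w.2 ^ 2, hwn.symm⟩
      exact_mod_cast this
    rw [hInter] at hcardsum
    simpa using hcardsum

lemma inert_components (hp : p.Prime) (h8 : p % 8 = 5 ∨ p % 8 = 7) {u v : ℤ}
    (h : (p:ℤ) ∣ u ^ 2 + 2 * v ^ 2) : (p:ℤ) ∣ u ∧ (p:ℤ) ∣ v := by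
  haveI : Fact p.Prime := ⟨hp⟩
  have hp2 : p ≠ 2 := by rintro rfl; omega
  have hUV : (u : ZMod p) ^ 2 + 2 * (v : ZMod p) ^ 2 = 0 := by
    have := (ZMod.intCast_zmod_eq_zero_iff_dvd _ p).2 h
    push_cast at this
    exact this
  have hV : (v : ZMod p) = 0 := by
    by_contra hV
    have hsq : IsSquare (-2 : ZMod p) := by
      refine ⟨(u : ZMod p) * ((v : ZMod p))⁻¹, ?_⟩
      have hv2 : ((v : ZMod p)) * ((v : ZMod p))⁻¹ = 1 := ZMod.mul_inv_of_unit _ (Ne.isUnit hV)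
      have hU2 : (u : ZMod p) ^ 2 = -2 * (v : ZMod p) ^ 2 := by linear_combination hUV
      calc (-2 : ZMod p) = -2 * ((v:ZMod p) * ((v:ZMod p))⁻¹) * ((v:ZMod p) * ((v:ZMod p))⁻¹) := by
            rw [hv2]; ring
        _ = ((u:ZMod p) * ((v:ZMod p))⁻¹) * ((u:ZMod p) * ((v:ZMod p))⁻¹) := by
            have : (-2 : ZMod p) * (v:ZMod p)^2 * (((v:ZMod p))⁻¹ * ((v:ZMod p))⁻¹)
                = (u:ZMod p)^2 * (((v:ZMod p))⁻¹ * ((v:ZMod p))⁻¹) := by rw [hU2]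
            calc (-2:ZMod p) * ((v:ZMod p) * ((v:ZMod p))⁻¹) * ((v:ZMod p) * ((v:ZMod p))⁻¹)
                = (-2 : ZMod p) * (v:ZMod p)^2 * (((v:ZMod p))⁻¹ * ((v:ZMod p))⁻¹) := by ring
              _ = (u:ZMod p)^2 * (((v:ZMod p))⁻¹ * ((v:ZMod p))⁻¹) := this
              _ = ((u:ZMod p) * ((v:ZMod p))⁻¹) * ((u:ZMod p) * ((v:ZMod p))⁻¹) := by ring
    have := (ZMod.exists_sq_eq_neg_two_iff (p := p) hp2).1 hsq
    omega
  have hU : (u : ZMod p) = 0 := by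
    have hU2 : (u : ZMod p) ^ 2 = 0 := by rw [hV] at hUV; linear_combination hUV
    exact pow_eq_zero_iff (by norm_num) |>.1 hU2
  exact ⟨(ZMod.intCast_zmod_eq_zero_iff_dvd _ p).1 hU,
    (ZMod.intCast_zmod_eq_zero_iff_dvd _ p).1 hV⟩

lemma inert_count (hp : p.Prime) (h8 : p % 8 = 5 ∨ p % 8 = 7) :
    (p ∣ n → tR (p * n) = tR (n / p)) ∧ (¬ p ∣ n → tR (p * n) = 0) := by
  classical
  have hp0 : (p : ℤ) ≠ 0 := by exact_mod_cast hp.ne_zero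
  have hmain : ∀ z ∈ Rset (p * n),
      ∃ w : ℤ × ℤ, z = ((p:ℤ) * w.1, (p:ℤ) * w.2) ∧ (p:ℤ) * (w.1 ^ 2 + 2 * w.2 ^ 2) = (n:ℤ) := by
    intro z hz
    rw [mem_Rset] at hz
    have hzz : z.1 ^ 2 + 2 * z.2 ^ 2 = (p:ℤ) * n := by push_cast at hz; linarith [hz]
    have hdv : (p:ℤ) ∣ z.1 ^ 2 + 2 * z.2 ^ 2 := ⟨n, hzz⟩
    obtain ⟨h1, h2⟩ := inert_components hp h8 hdv
    obtain ⟨w1, hw1⟩ := h1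
    obtain ⟨w2, hw2⟩ := h2
    refine ⟨(w1, w2), by rw [← hw1, ← hw2], ?_⟩
    apply mul_left_cancel₀ hp0
    linear_combination (-z.1 - (p:ℤ) * w1) * hw1 + (-2 * z.2 - 2 * (p:ℤ) * w2) * hw2 + hzz
  constructor
  · intro hdvd
    have hnp : ((n / p : ℕ) : ℤ) * p = (n : ℤ) := by exact_mod_cast Nat.div_mul_cancel hdvd
    have hEq : Rset (p * n) = (Rset (n / p)).image (fun w : ℤ × ℤ => ((p:ℤ) * w.1, (p:ℤ) * w.2)) := by
      apply Finset.Subset.antisymm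
      · intro z hz
        obtain ⟨w, hzw, hwn⟩ := hmain z hz
        rw [Finset.mem_image]
        refine ⟨w, ?_, hzw.symm⟩
        rw [mem_Rset]
        apply mul_left_cancel₀ hp0
        rw [hwn, ← hnp]
        ring
      · intro z hz
        obtain ⟨w, hw, rfl⟩ := Finset.mem_image.1 hz
        rw [mem_Rset] at hw ⊢
        push_cast
        linear_combination ((p:ℤ))^2 * hw + (p:ℤ) * hnp
    rw [tR, hEq, Finset.card_image_of_injective _ (scale_inj hp)]
    rfl
  · intro hndvd
    have hEq : Rset (p * n) = ∅ := by
      rw [Finset.eq_empty_iff_forall_notMem]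
      intro z hz
      obtain ⟨w, hzw, hwn⟩ := hmain z hz
      apply hndvd
      have : (p : ℤ) ∣ (n : ℤ) := ⟨w.1 ^ 2 + 2 * w.2 ^ 2, hwn.symm⟩
      exact_mod_cast this
    rw [tR, hEq]
    rfl

lemma e_pn_of_not_dvd (hp : p.Prime) (h : ¬ p ∣ n) : e (p * n) = 0 := by
  rw [e, if_neg]
  rintro ⟨k, hk⟩
  apply h
  have hpk : p ∣ k := by
    have h2 : p ∣ k * k := ⟨n, hk⟩
    rcases (Nat.Prime.dvd_mul hp).1 h2 with h' | h' <;> exact h'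
  obtain ⟨m, rfl⟩ := hpk
  refine ⟨m * m, ?_⟩
  have : p * (p * (m * m)) = p * n := by rw [← hk]; ring
  exact (Nat.eq_of_mul_eq_mul_left hp.pos this).symm

lemma e_pn_of_dvd (hp : p.Prime) (h : p ∣ n) : e (p * n) = e (n / p) := by
  have hkey : p * (n / p) = n := Nat.mul_div_cancel' h
  have hiff : (∃ k, k * k = p * n) ↔ (∃ k, k * k = n / p) := by
    constructor
    · rintro ⟨k, hk⟩
      have hpk : p ∣ k := by
        have h2 : p ∣ k * k := ⟨n, hk⟩
        rcases (Nat.Prime.dvd_mul hp).1 h2 with h' | h' <;> exact h'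
      obtain ⟨m, rfl⟩ := hpk
      refine ⟨m, ?_⟩
      have h3 : p * (p * (m * m)) = p * (p * (n / p)) := by
        calc p * (p * (m * m)) = p * m * (p * m) := by ring
          _ = p * n := hk
          _ = p * (p * (n / p)) := by rw [hkey]
      exact Nat.eq_of_mul_eq_mul_left hp.pos (Nat.eq_of_mul_eq_mul_left hp.pos h3)
    · rintro ⟨k, hk⟩
      exact ⟨p * k, by rw [show p * k * (p * k) = p * (p * (k * k)) from by ring, hk, hkey]⟩
  rw [e, e, if_congr hiff rfl rfl]

lemma e_zero_of_mod8_3 {m : ℕ} (h : m % 8 = 3) : e m = 0 := by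
  rw [e, if_neg]
  rintro ⟨k, hk⟩
  have h1 := Nat.mul_mod k k 8
  have h2 : k % 8 < 8 := Nat.mod_lt _ (by norm_num)
  interval_cases h' : k % 8 <;> omega

lemma div_odd (h : p ∣ n) (hn : n % 2 = 1) : (n / p) % 2 = 1 := by
  by_contra h2
  have h3 : 2 ∣ n / p := by omega
  have h4 : 2 ∣ n := dvd_trans h3 (Nat.div_dvd_of_dvd h)
  omega

lemma mul_odd (hp : p % 2 = 1) (hn : n % 2 = 1) : (p * n) % 2 = 1 := by
  have := Nat.odd_mul.2 ⟨Nat.odd_iff.2 hp, Nat.odd_iff.2 hn⟩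
  exact Nat.odd_iff.1 this

lemma split_parity_ndvd (hp : p.Prime) (hpodd : p % 2 = 1) (hcd : c ^ 2 + 2 * d ^ 2 = (p : ℤ))
    (hnodd : n % 2 = 1) (hndvd : ¬ p ∣ n) : sp (p * n) % 2 = e n % 2 := by
  have h1 := structure_count (mul_odd hpodd hnodd)
  have h2 := structure_count hnodd
  have h3 := (split_count (n := n) hp hpodd hcd).2 hndvd
  have h4 := e_pn_of_not_dvd hp hndvd
  omega

lemma split_parity_dvd (hp : p.Prime) (hpodd : p % 2 = 1) (hcd : c ^ 2 + 2 * d ^ 2 = (p : ℤ))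
    (hnodd : n % 2 = 1) (hdvd : p ∣ n) :
    (sp (p * n) + sp (n / p)) % 2 = (e n + e (n / p)) % 2 := by
  have h1 := structure_count (mul_odd hpodd hnodd)
  have h2 := structure_count hnodd
  have h2' := structure_count (div_odd hdvd hnodd)
  have h3 := (split_count (n := n) hp hpodd hcd).1 hdvd
  have h4 := e_pn_of_dvd hp hdvd
  omega

lemma inert_parity_ndvd (hp : p.Prime) (hpodd : p % 2 = 1) (h8 : p % 8 = 5 ∨ p % 8 = 7)
    (hnodd : n % 2 = 1) (hndvd : ¬ p ∣ n) : sp (p * n) = 0 := by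
  have h1 := structure_count (mul_odd hpodd hnodd)
  have h3 := (inert_count (n := n) hp h8).2 hndvd
  omega

lemma inert_parity_dvd (hp : p.Prime) (hpodd : p % 2 = 1) (h8 : p % 8 = 5 ∨ p % 8 = 7)
    (hnodd : n % 2 = 1) (hdvd : p ∣ n) : sp (p * n) % 2 = sp (n / p) % 2 := by
  have h1 := structure_count (mul_odd hpodd hnodd)
  have h2' := structure_count (div_odd hdvd hnodd)
  have h3 := (inert_count (n := n) hp h8).1 hdvd
  have h4 := e_pn_of_dvd hp hdvd
  omega

end Split

end HeckeDelta

namespace HeckeDelta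

open Classical

lemma zmod2_add_self (x : ZMod 2) : x + x = 0 := by revert x; decide
lemma zmod2_mul_self (x : ZMod 2) : x * x = x := by revert x; decide

/-- coefficients of a square over `F₂`. -/
lemma coeff_sq (f : PowerSeries (ZMod 2)) (k : ℕ) :
    PowerSeries.coeff k (f * f)
      = if 2 ∣ k then PowerSeries.coeff (k / 2) f else 0 := by
  classical
  rw [PowerSeries.coeff_mul]
  rw [Finset.Nat.sum_antidiagonal_eq_sum_range_succ
    (fun i j => PowerSeries.coeff i f * PowerSeries.coeff j f)]
  set c : ℕ → ZMod 2 := fun i => PowerSeries.coeff i f with hc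
  have hsplit := Finset.sum_filter_add_sum_filter_not (Finset.range (k+1))
    (fun i => 2 * i = k) (fun i => c i * c (k - i))
  rw [← hsplit]
  have hzero : ∑ i ∈ (Finset.range (k+1)).filter (fun i => ¬ 2 * i = k), c i * c (k - i) = 0 := by
    apply Finset.sum_involution (fun i _ => k - i)
    · intro i hi
      simp only [Finset.mem_filter, Finset.mem_range] at hi
      have h1 : k - (k - i) = i := by omega
      rw [h1, mul_comm]
      exact zmod2_add_self _
    · intro i hi _
      simp only [Finset.mem_filter, Finset.mem_range] at hi
      omega
    · intro i hi
      simp only [Finset.mem_filter, Finset.mem_range] at hi ⊢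
      omega
    · intro i hi
      simp only [Finset.mem_filter, Finset.mem_range] at hi
      omega
  rw [hzero, add_zero]
  by_cases h2 : 2 ∣ k
  · have hfil : (Finset.range (k+1)).filter (fun i => 2 * i = k) = {k / 2} := by
      ext i
      simp only [Finset.mem_filter, Finset.mem_range, Finset.mem_singleton]
      omega
    rw [hfil, Finset.sum_singleton, if_pos h2]
    have : k - k / 2 = k / 2 := by omega
    rw [this, zmod2_mul_self]
  · have hfil : (Finset.range (k+1)).filter (fun i => 2 * i = k) = ∅ := by
      ext i
      simp only [Finset.mem_filter, Finset.mem_range, Finset.notMem_empty, iff_false]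
      omega
    rw [hfil, Finset.sum_empty, if_neg h2]

lemma coeff_delta (j : ℕ) :
    PowerSeries.coeff j Delta = if ∃ t : ℕ, j = (2 * t + 1) ^ 2 then 1 else 0 := by
  rw [Delta, PowerSeries.coeff_mk]

lemma coeff_delta_sq (i : ℕ) :
    PowerSeries.coeff i (Delta * Delta)
      = if ∃ s : ℕ, i = 2 * (2 * s + 1) ^ 2 then 1 else 0 := by
  rw [coeff_sq, coeff_delta]
  by_cases h2 : 2 ∣ i
  · rw [if_pos h2]
    congr 1
    · apply propext
      constructor
      · rintro ⟨s, hs⟩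
        exact ⟨s, by omega⟩
      · rintro ⟨s, hs⟩
        exact ⟨s, by omega⟩
  · rw [if_neg h2, eq_comm, if_neg]
    rintro ⟨s, rfl⟩
    exact h2 ⟨(2 * s + 1) ^ 2, rfl⟩

end HeckeDelta


namespace HeckeDelta

open Classical

noncomputable def Qset (m : ℕ) : Finset (ℤ × ℤ) :=
  (Pset m).filter fun z => Odd z.1 ∧ Odd z.2

lemma mem_Qset {m : ℕ} {z : ℤ × ℤ} :
    z ∈ Qset m ↔ (z.1 ^ 2 + 2 * z.2 ^ 2 = (m : ℤ) ∧ 0 < z.1 ∧ 0 < z.2) ∧ Odd z.1 ∧ Odd z.2 := by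
  simp [Qset, Finset.mem_filter, mem_Pset, and_assoc]

lemma sq_cancel {a b : ℤ} (ha : 0 < a) (hb : 0 < b) (h : a ^ 2 = b ^ 2) : a = b := by
  have h2 : (a - b) * (a + b) = 0 := by linear_combination h
  rcases mul_eq_zero.1 h2 with h3 | h3
  · linarith
  · linarith

lemma coeff_delta_cubed (m : ℕ) :
    PowerSeries.coeff m (Delta ^ 3) = ((Qset m).card : ZMod 2) := by
  classical
  have hpow : Delta ^ 3 = Delta * Delta * Delta := by ring
  rw [hpow, PowerSeries.coeff_mul, Finset.Nat.sum_antidiagonal_eq_sum_range_succ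
    (fun i j => PowerSeries.coeff i (Delta * Delta) * PowerSeries.coeff j Delta)]
  have hterm : ∀ i ∈ Finset.range (m + 1),
      PowerSeries.coeff i (Delta * Delta) * PowerSeries.coeff (m - i) Delta
        = if (∃ s : ℕ, i = 2 * (2 * s + 1) ^ 2) ∧ (∃ t : ℕ, m - i = (2 * t + 1) ^ 2)
            then (1 : ZMod 2) else 0 := by
    intro i _
    rw [coeff_delta_sq, coeff_delta]
    by_cases hB : ∃ s : ℕ, i = 2 * (2 * s + 1) ^ 2 <;>
      by_cases hA : ∃ t : ℕ, m - i = (2 * t + 1) ^ 2 <;>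
      simp [hB, hA]
  rw [Finset.sum_congr rfl hterm, Finset.sum_boole]
  congr 1
  symm
  apply Finset.card_nbij (fun z => (2 * z.2 ^ 2).toNat)
  · -- maps Qset into the filter
    intro z hz
    rw [Finset.mem_coe, mem_Qset] at hz
    obtain ⟨⟨heq, hx, hy⟩, hox, hoy⟩ := hz
    obtain ⟨s, hs⟩ := hoy
    obtain ⟨t, ht⟩ := hox
    have hs0 : 0 ≤ s := by omega
    have ht0 : 0 ≤ t := by omega
    have htoNat : ((2 * z.2 ^ 2).toNat : ℤ) = 2 * z.2 ^ 2 :=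
      Int.toNat_of_nonneg (by positivity)
    have hxx : (1:ℤ) ≤ z.1 ^ 2 := by nlinarith [hx]
    have hle : (2 * z.2 ^ 2).toNat ≤ m := by
      have h1 : (2 * z.2 ^ 2 : ℤ) ≤ (m : ℤ) := by nlinarith [hxx]
      omega
    simp only [Finset.mem_coe, Finset.mem_filter, Finset.mem_range]
    refine ⟨by omega, ⟨s.toNat, ?_⟩, ⟨t.toNat, ?_⟩⟩
    · have hcast : ((2 * (2 * s.toNat + 1) ^ 2 : ℕ) : ℤ) = ((2 * z.2 ^ 2).toNat : ℤ) := by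
        push_cast
        rw [Int.toNat_of_nonneg hs0]
        rw [htoNat, hs]
        all_goals push_cast
        all_goals ring
      exact_mod_cast hcast.symm
    · have hcast : ((m - (2 * z.2 ^ 2).toNat : ℕ) : ℤ) = (((2 * t.toNat + 1) ^ 2 : ℕ) : ℤ) := by
        rw [Nat.cast_sub hle, htoNat]
        push_cast
        rw [Int.toNat_of_nonneg ht0]
        rw [← ht]
        linarith [heq]
      exact_mod_cast hcast
  · -- injectivity
    intro z hz w hw h
    rw [Finset.mem_coe, mem_Qset] at hz hw
    obtain ⟨⟨heqz, hxz, hyz⟩, _, _⟩ := hz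
    obtain ⟨⟨heqw, hxw, hyw⟩, _, _⟩ := hw
    simp only at h
    have h2 : (2 * z.2 ^ 2 : ℤ) = 2 * w.2 ^ 2 := by
      rw [← Int.toNat_of_nonneg (show (0:ℤ) ≤ 2 * z.2 ^ 2 by positivity),
          ← Int.toNat_of_nonneg (show (0:ℤ) ≤ 2 * w.2 ^ 2 by positivity), h]
    have hy2 : z.2 = w.2 := sq_cancel hyz hyw (by linarith)
    have hx2 : z.1 = w.1 := sq_cancel hxz hxw (by linarith [heqz, heqw])
    exact Prod.ext hx2 hy2
  · -- surjectivity
    intro i hi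
    simp only [Finset.coe_filter, Set.mem_setOf_eq, Finset.mem_range] at hi
    obtain ⟨hilt, ⟨s, hs⟩, ⟨t, ht⟩⟩ := hi
    have him : m = (2 * t + 1) ^ 2 + i := by
      obtain ⟨A, hA⟩ : ∃ A, (2 * t + 1) ^ 2 = A := ⟨_, rfl⟩
      rw [hA] at ht ⊢
      omega
    refine ⟨(((2 * t + 1 : ℕ) : ℤ), ((2 * s + 1 : ℕ) : ℤ)), ?_, ?_⟩
    · rw [Finset.mem_coe, mem_Qset]
      refine ⟨⟨?_, by positivity, by positivity⟩, ⟨(t : ℤ), by push_cast; ring⟩,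
        ⟨(s : ℤ), by push_cast; ring⟩⟩
      rw [him, hs]
      push_cast
      ring
    · simp only []
      have hcast : (2 * (((2 * s + 1 : ℕ) : ℤ)) ^ 2) = ((i : ℕ) : ℤ) := by
        rw [hs]
        push_cast
        ring
      rw [hcast, Int.toNat_natCast]


lemma odd_sq_mod8 {x : ℤ} (hx : Odd x) : ∃ j : ℤ, x ^ 2 = 8 * j + 1 := by
  obtain ⟨k, rfl⟩ := hx
  obtain ⟨j, hj⟩ := Int.even_mul_succ_self k
  exact ⟨j, by linear_combination 4 * hj⟩

lemma Qset_eq_Pset {m : ℕ} (h : m % 8 = 3) : Qset m = Pset m := by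
  apply Finset.Subset.antisymm
  · exact Finset.filter_subset _ _
  · intro z hz
    rw [mem_Pset] at hz
    obtain ⟨heq, hx, hy⟩ := hz
    have hm8 : (m : ℤ) % 8 = 3 := by omega
    have hox : Odd z.1 := by
      rcases Int.even_or_odd z.1 with he | ho
      · exfalso
        obtain ⟨c, hc⟩ := he
        have h2 : (m : ℤ) = 2 * (2 * c ^ 2 + z.2 ^ 2) := by
          linear_combination -heq + (z.1 + 2 * c) * hc
        omega
      · exact ho
    rw [mem_Qset]
    refine ⟨⟨heq, hx, hy⟩, hox, ?_⟩
    rcases Int.even_or_odd z.2 with he | ho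
    · exfalso
      obtain ⟨j, hj⟩ := odd_sq_mod8 hox
      obtain ⟨c, hc⟩ := he
      have h2 : (m : ℤ) = 8 * (j + c ^ 2) + 1 := by
        linear_combination -heq + hj + 2 * (z.2 + 2 * c) * hc
      omega
    · exact ho

lemma Qset_empty {m : ℕ} (h : m % 8 ≠ 3) : Qset m = ∅ := by
  rw [Finset.eq_empty_iff_forall_notMem]
  intro z hz
  rw [mem_Qset] at hz
  obtain ⟨⟨heq, hx, hy⟩, hox, hoy⟩ := hz
  obtain ⟨j, hj⟩ := odd_sq_mod8 hox
  obtain ⟨i, hi⟩ := odd_sq_mod8 hoy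
  have h2 : (m : ℤ) = 8 * (j + 2 * i) + 3 := by
    linear_combination -heq + hj + 2 * hi
  omega

lemma coeff_delta_cubed_eval (m : ℕ) :
    PowerSeries.coeff m (Delta ^ 3)
      = if m % 8 = 3 then ((sp m : ZMod 2)) else 0 := by
  rw [coeff_delta_cubed]
  by_cases h : m % 8 = 3
  · rw [if_pos h, Qset_eq_Pset h]
    rfl
  · rw [if_neg h, Qset_empty h]
    simp

lemma coeff_delta_eval (n : ℕ) :
    PowerSeries.coeff n Delta = if n % 2 = 1 then ((e n : ZMod 2)) else 0 := by
  rw [coeff_delta]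
  by_cases hodd : n % 2 = 1
  · rw [if_pos hodd, e]
    by_cases hsq : ∃ k : ℕ, k * k = n
    · rw [if_pos hsq, if_pos]
      · simp
      · obtain ⟨k, hk⟩ := hsq
        have hk2 : k % 2 = 1 := by
          rcases Nat.even_or_odd k with he | ho
          · exfalso
            obtain ⟨c, hc⟩ := he
            have : n = 2 * (2 * c * c) := by
              rw [← hk, hc]; ring
            omega
          · exact Nat.odd_iff.1 ho
        refine ⟨k / 2, ?_⟩
        have : 2 * (k / 2) + 1 = k := by omega
        rw [this, pow_two, hk]
    · rw [if_neg hsq, if_neg]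
      · simp
      · rintro ⟨t, rfl⟩
        exact hsq ⟨2 * t + 1, (pow_two _).symm⟩
  · rw [if_neg hodd, if_neg]
    rintro ⟨t, rfl⟩
    have : (2 * t + 1) ^ 2 = 2 * (2 * t * t + 2 * t) + 1 := by ring
    omega

lemma coeff_heckeT (p : ℕ) (f : PowerSeries (ZMod 2)) (n : ℕ) :
    PowerSeries.coeff n (heckeT p f)
      = PowerSeries.coeff (p * n) f
        + if p ∣ n then PowerSeries.coeff (n / p) f else 0 := by
  rw [heckeT, PowerSeries.coeff_mk]

lemma cast_mod2 {a b : ℕ} (h : a % 2 = b % 2) : (a : ZMod 2) = (b : ZMod 2) :=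
  (ZMod.natCast_eq_natCast_iff _ _ _).2 h

lemma cast_zero_of_even {a : ℕ} (h : a % 2 = 0) : (a : ZMod 2) = 0 := by
  have h2 : (a : ZMod 2) = ((0 : ℕ) : ZMod 2) := cast_mod2 (by omega)
  simpa using h2

lemma e_zero_of_mod8' {m : ℕ} (h : m % 8 = 3 ∨ m % 8 = 5 ∨ m % 8 = 7) : e m = 0 := by
  rw [e, if_neg]
  rintro ⟨k, hk⟩
  have h1 := Nat.mul_mod k k 8
  have h2 : k % 8 < 8 := Nat.mod_lt _ (by norm_num)
  interval_cases h' : k % 8 <;> omega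


lemma key (p : ℕ) (hp : p.Prime) (hpodd : p % 2 = 1) (n : ℕ) :
    PowerSeries.coeff n (heckeT p (Delta ^ 3))
      = if p % 8 = 3 then PowerSeries.coeff n Delta else 0 := by
  classical
  rw [coeff_heckeT, coeff_delta_cubed_eval, coeff_delta_cubed_eval, coeff_delta_eval]
  have h8p : p % 8 = 1 ∨ p % 8 = 3 ∨ p % 8 = 5 ∨ p % 8 = 7 := by omega
  have hmul8 := Nat.mul_mod p n 8
  by_cases hn2 : n % 2 = 1
  case neg =>
    have hn2' : n % 2 = 0 := by omega
    have hmul2 := Nat.mul_mod p n 2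
    rw [hpodd, hn2'] at hmul2
    norm_num at hmul2
    have hA : (p * n) % 8 ≠ 3 := by omega
    rw [if_neg hA, if_neg hn2]
    have hB : (if p ∣ n then (if (n / p) % 8 = 3 then ((sp (n / p) : ZMod 2)) else 0) else 0)
        = 0 := by
      by_cases hdvd : p ∣ n
      · rw [if_pos hdvd, if_neg]
        intro h3
        have hodd' : (n / p) % 2 = 1 := by omega
        have hmo := mul_odd hpodd hodd'
        rw [Nat.mul_div_cancel' hdvd] at hmo
        omega
      · rw [if_neg hdvd]
    rw [hB]
    simp
  case pos =>
    rw [if_pos hn2]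
    have hn8 : n % 8 = 1 ∨ n % 8 = 3 ∨ n % 8 = 5 ∨ n % 8 = 7 := by omega
    rcases h8p with h8 | h8 | h8 | h8
    · -- p ≡ 1 [8]
      rw [if_neg (by omega : ¬ p % 8 = 3)]
      obtain ⟨c, d, hcd⟩ := exists_sq_add_two_sq p hp (Or.inl h8)
      rw [h8] at hmul8
      by_cases hdvd : p ∣ n
      · have hdiv8 : n % 8 = ((n / p) % 8 * 1) % 8 := by
          conv_lhs => rw [← Nat.div_mul_cancel hdvd, Nat.mul_mod, h8]
        rcases hn8 with hn8 | hn8 | hn8 | hn8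
        · rw [if_neg (by omega : ¬ (p * n) % 8 = 3), if_pos hdvd,
            if_neg (by omega : ¬ (n / p) % 8 = 3)]
          simp
        · rw [if_pos (by omega : (p * n) % 8 = 3), if_pos hdvd,
            if_pos (by omega : (n / p) % 8 = 3)]
          have hpar := split_parity_dvd hp hpodd hcd hn2 hdvd
          have he1 : e n = 0 := e_zero_of_mod8' (by omega)
          have he2 : e (n / p) = 0 := e_zero_of_mod8' (by omega)
          have hc2 : ((sp (p * n) + sp (n / p) : ℕ) : ZMod 2) = ((0 : ℕ) : ZMod 2) :=
            cast_mod2 (by omega)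
          push_cast at hc2
          exact hc2
        · rw [if_neg (by omega : ¬ (p * n) % 8 = 3), if_pos hdvd,
            if_neg (by omega : ¬ (n / p) % 8 = 3)]
          simp
        · rw [if_neg (by omega : ¬ (p * n) % 8 = 3), if_pos hdvd,
            if_neg (by omega : ¬ (n / p) % 8 = 3)]
          simp
      · rcases hn8 with hn8 | hn8 | hn8 | hn8
        · rw [if_neg (by omega : ¬ (p * n) % 8 = 3), if_neg hdvd]
          simp
        · rw [if_pos (by omega : (p * n) % 8 = 3), if_neg hdvd, add_zero]
          have hpar := split_parity_ndvd hp hpodd hcd hn2 hdvd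
          have he1 : e n = 0 := e_zero_of_mod8' (by omega)
          exact cast_zero_of_even (by omega)
        · rw [if_neg (by omega : ¬ (p * n) % 8 = 3), if_neg hdvd]
          simp
        · rw [if_neg (by omega : ¬ (p * n) % 8 = 3), if_neg hdvd]
          simp
    · -- p ≡ 3 [8]
      rw [if_pos h8]
      obtain ⟨c, d, hcd⟩ := exists_sq_add_two_sq p hp (Or.inr h8)
      rw [h8] at hmul8
      by_cases hdvd : p ∣ n
      · have hdiv8 : n % 8 = ((n / p) % 8 * 3) % 8 := by
          conv_lhs => rw [← Nat.div_mul_cancel hdvd, Nat.mul_mod, h8]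
        rcases hn8 with hn8 | hn8 | hn8 | hn8
        · rw [if_pos (by omega : (p * n) % 8 = 3), if_pos hdvd,
            if_pos (by omega : (n / p) % 8 = 3)]
          have hpar := split_parity_dvd hp hpodd hcd hn2 hdvd
          have he2 : e (n / p) = 0 := e_zero_of_mod8' (by omega)
          have hc2 : ((sp (p * n) + sp (n / p) : ℕ) : ZMod 2) = ((e n : ℕ) : ZMod 2) :=
            cast_mod2 (by omega)
          push_cast at hc2
          exact hc2
        · rw [if_neg (by omega : ¬ (p * n) % 8 = 3), if_pos hdvd,
            if_neg (by omega : ¬ (n / p) % 8 = 3)]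
          rw [e_zero_of_mod8' (by omega : n % 8 = 3 ∨ n % 8 = 5 ∨ n % 8 = 7)]
          simp
        · rw [if_neg (by omega : ¬ (p * n) % 8 = 3), if_pos hdvd,
            if_neg (by omega : ¬ (n / p) % 8 = 3)]
          rw [e_zero_of_mod8' (by omega : n % 8 = 3 ∨ n % 8 = 5 ∨ n % 8 = 7)]
          simp
        · rw [if_neg (by omega : ¬ (p * n) % 8 = 3), if_pos hdvd,
            if_neg (by omega : ¬ (n / p) % 8 = 3)]
          rw [e_zero_of_mod8' (by omega : n % 8 = 3 ∨ n % 8 = 5 ∨ n % 8 = 7)]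
          simp
      · rcases hn8 with hn8 | hn8 | hn8 | hn8
        · rw [if_pos (by omega : (p * n) % 8 = 3), if_neg hdvd, add_zero]
          exact cast_mod2 (split_parity_ndvd hp hpodd hcd hn2 hdvd)
        · rw [if_neg (by omega : ¬ (p * n) % 8 = 3), if_neg hdvd]
          rw [e_zero_of_mod8' (by omega : n % 8 = 3 ∨ n % 8 = 5 ∨ n % 8 = 7)]
          simp
        · rw [if_neg (by omega : ¬ (p * n) % 8 = 3), if_neg hdvd]
          rw [e_zero_of_mod8' (by omega : n % 8 = 3 ∨ n % 8 = 5 ∨ n % 8 = 7)]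
          simp
        · rw [if_neg (by omega : ¬ (p * n) % 8 = 3), if_neg hdvd]
          rw [e_zero_of_mod8' (by omega : n % 8 = 3 ∨ n % 8 = 5 ∨ n % 8 = 7)]
          simp
    · -- p ≡ 5 [8]
      rw [if_neg (by omega : ¬ p % 8 = 3)]
      rw [h8] at hmul8
      have h8' : p % 8 = 5 ∨ p % 8 = 7 := Or.inl h8
      by_cases hdvd : p ∣ n
      · have hdiv8 : n % 8 = ((n / p) % 8 * 5) % 8 := by
          conv_lhs => rw [← Nat.div_mul_cancel hdvd, Nat.mul_mod, h8]
        rcases hn8 with hn8 | hn8 | hn8 | hn8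
        · rw [if_neg (by omega : ¬ (p * n) % 8 = 3), if_pos hdvd,
            if_neg (by omega : ¬ (n / p) % 8 = 3)]
          simp
        · rw [if_neg (by omega : ¬ (p * n) % 8 = 3), if_pos hdvd,
            if_neg (by omega : ¬ (n / p) % 8 = 3)]
          simp
        · rw [if_neg (by omega : ¬ (p * n) % 8 = 3), if_pos hdvd,
            if_neg (by omega : ¬ (n / p) % 8 = 3)]
          simp
        · rw [if_pos (by omega : (p * n) % 8 = 3), if_pos hdvd,
            if_pos (by omega : (n / p) % 8 = 3)]
          have hcast := cast_mod2 (inert_parity_dvd hp hpodd h8' hn2 hdvd)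
          rw [hcast]
          exact zmod2_add_self _
      · rcases hn8 with hn8 | hn8 | hn8 | hn8
        · rw [if_neg (by omega : ¬ (p * n) % 8 = 3), if_neg hdvd]
          simp
        · rw [if_neg (by omega : ¬ (p * n) % 8 = 3), if_neg hdvd]
          simp
        · rw [if_neg (by omega : ¬ (p * n) % 8 = 3), if_neg hdvd]
          simp
        · rw [if_pos (by omega : (p * n) % 8 = 3), if_neg hdvd, add_zero]
          rw [inert_parity_ndvd hp hpodd h8' hn2 hdvd]
          simp
    · -- p ≡ 7 [8]
      rw [if_neg (by omega : ¬ p % 8 = 3)]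
      rw [h8] at hmul8
      have h8' : p % 8 = 5 ∨ p % 8 = 7 := Or.inr h8
      by_cases hdvd : p ∣ n
      · have hdiv8 : n % 8 = ((n / p) % 8 * 7) % 8 := by
          conv_lhs => rw [← Nat.div_mul_cancel hdvd, Nat.mul_mod, h8]
        rcases hn8 with hn8 | hn8 | hn8 | hn8
        · rw [if_neg (by omega : ¬ (p * n) % 8 = 3), if_pos hdvd,
            if_neg (by omega : ¬ (n / p) % 8 = 3)]
          simp
        · rw [if_neg (by omega : ¬ (p * n) % 8 = 3), if_pos hdvd,
            if_neg (by omega : ¬ (n / p) % 8 = 3)]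
          simp
        · rw [if_pos (by omega : (p * n) % 8 = 3), if_pos hdvd,
            if_pos (by omega : (n / p) % 8 = 3)]
          have hcast := cast_mod2 (inert_parity_dvd hp hpodd h8' hn2 hdvd)
          rw [hcast]
          exact zmod2_add_self _
        · rw [if_neg (by omega : ¬ (p * n) % 8 = 3), if_pos hdvd,
            if_neg (by omega : ¬ (n / p) % 8 = 3)]
          simp
      · rcases hn8 with hn8 | hn8 | hn8 | hn8
        · rw [if_neg (by omega : ¬ (p * n) % 8 = 3), if_neg hdvd]
          simp
        · rw [if_neg (by omega : ¬ (p * n) % 8 = 3), if_neg hdvd]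
          simp
        · rw [if_pos (by omega : (p * n) % 8 = 3), if_neg hdvd, add_zero]
          rw [inert_parity_ndvd hp hpodd h8' hn2 hdvd]
          simp
        · rw [if_neg (by omega : ¬ (p * n) % 8 = 3), if_neg hdvd]
          simp

end HeckeDelta

theorem heckeT_Delta_cube (p : ℕ) (hp : p.Prime) (hodd : Odd p) :
    (p % 8 = 3 → heckeT p (Delta ^ 3) = Delta) ∧
    (p % 8 ≠ 3 → heckeT p (Delta ^ 3) = 0) := by
  have hpodd : p % 2 = 1 := Nat.odd_iff.1 hodd
  constructor
  · intro h3
    apply PowerSeries.ext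
    intro n
    rw [HeckeDelta.key p hp hpodd n, if_pos h3]
  · intro h3
    apply PowerSeries.ext
    intro n
    rw [HeckeDelta.key p hp hpodd n, if_neg h3]
    simp
end

section
/- In F₂[[q]], the series x = Δ(q) and y = Δ(q³), where Δ(q) = Σ_{m≥0} q^{(2m+1)²}, satisfy the polynomial relation y⁴ + x·y + x⁴ = 0. -/
/-- Zagier-style involution on odd representations `n = a² + 3b²`. -/
def invol : ℕ × ℕ → ℕ × ℕ := fun p =>
  if (p.1 + p.2) % 4 = 2 then (((p.1 - 3 * p.2) + (3 * p.2 - p.1)) / 2, (p.1 + p.2) / 2)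
  else ((p.1 + 3 * p.2) / 2, ((p.1 - p.2) + (p.2 - p.1)) / 2)

lemma norm_int {a b c d : ℤ}
    (h : (2*c = a - 3*b ∨ 2*c = 3*b - a) ∧ 2*d = a + b ∨
         2*c = a + 3*b ∧ (2*d = a - b ∨ 2*d = b - a)) :
    c ^ 2 + 3 * d ^ 2 = a ^ 2 + 3 * b ^ 2 := by
  have key : (2*c) ^ 2 + 3 * (2*d) ^ 2 = 4 * (a ^ 2 + 3 * b ^ 2) := by
    rcases h with ⟨hc | hc, hd⟩ | ⟨hc, hd | hd⟩ <;> rw [hc, hd] <;> ring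
  nlinarith [key]

lemma norm_nat {a b c d : ℕ}
    (h : (2*c + 3*b = a ∨ 2*c + a = 3*b) ∧ 2*d = a + b ∨
         2*c = a + 3*b ∧ (2*d + b = a ∨ 2*d + a = b)) :
    c ^ 2 + 3 * d ^ 2 = a ^ 2 + 3 * b ^ 2 := by
  have : (c:ℤ) ^ 2 + 3 * (d:ℤ) ^ 2 = (a:ℤ) ^ 2 + 3 * (b:ℤ) ^ 2 := by
    apply norm_int; rcases h with ⟨hc | hc, hd⟩ | ⟨hc, hd | hd⟩
    · exact Or.inl ⟨Or.inl (by omega), by omega⟩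
    · exact Or.inl ⟨Or.inr (by omega), by omega⟩
    · exact Or.inr ⟨by omega, Or.inl (by omega)⟩
    · exact Or.inr ⟨by omega, Or.inr (by omega)⟩
  exact_mod_cast this

lemma invol_master {a b : ℕ} (ha : a % 2 = 1) (hb : b % 2 = 1) :
    (invol (a, b)).1 % 2 = 1 ∧ (invol (a, b)).2 % 2 = 1 ∧
    (invol (a, b)).1 ^ 2 + 3 * (invol (a, b)).2 ^ 2 = a ^ 2 + 3 * b ^ 2 ∧
    invol (invol (a, b)) = (a, b) ∧ (invol (a, b) = (a, b) ↔ (a = b ∨ a = 3 * b)) := by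
  by_cases hbr : (a + b) % 4 = 2
  · -- branch 1
    by_cases hge : 3 * b ≤ a
    · obtain ⟨c, d, h1, h2, h3, h4⟩ :
          ∃ c d, 2*c + 3*b = a ∧ c % 2 = 1 ∧ 2*d = a + b ∧ d = 2*b + c :=
        ⟨(a - 3*b)/2, (a+b)/2, by omega, by omega, by omega, by omega⟩
      have he : invol (a, b) = (c, d) := by
        simp only [invol, if_pos hbr]
        exact Prod.ext (by simp; omega) (by simp; omega)
      have he2 : invol (c, d) = (a, b) := by
        have hbr2 : ¬ ((c + d) % 4 = 2) := by omega
        simp only [invol, if_neg hbr2]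
        exact Prod.ext (by simp; omega) (by simp; omega)
      rw [he]
      refine ⟨by omega, by omega, norm_nat (Or.inl ⟨Or.inl h1, h3⟩), he2, ?_⟩
      rw [Prod.mk.injEq]; omega
    · obtain ⟨c, d, h1, h2, h3, h4⟩ :
          ∃ c d, 2*c + a = 3*b ∧ c % 2 = 1 ∧ 2*d = a + b ∧ 2*b = c + d :=
        ⟨(3*b - a)/2, (a+b)/2, by omega, by omega, by omega, by omega⟩
      have he : invol (a, b) = (c, d) := by
        simp only [invol, if_pos hbr]
        exact Prod.ext (by simp; omega) (by simp; omega)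
      have he2 : invol (c, d) = (a, b) := by
        have hbr2 : (c + d) % 4 = 2 := by omega
        simp only [invol, if_pos hbr2]
        exact Prod.ext (by simp; omega) (by simp; omega)
      rw [he]
      refine ⟨by omega, by omega, norm_nat (Or.inl ⟨Or.inr h1, h3⟩), he2, ?_⟩
      rw [Prod.mk.injEq]; omega
  · -- branch 2
    have hbr0 : (a + b) % 4 = 0 := by omega
    by_cases hge : b ≤ a
    · obtain ⟨c, d, h1, h2, h3, h4⟩ :
          ∃ c d, 2*c = a + 3*b ∧ c % 2 = 1 ∧ 2*d + b = a ∧ c = 2*b + d :=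
        ⟨(a + 3*b)/2, (a - b)/2, by omega, by omega, by omega, by omega⟩
      have he : invol (a, b) = (c, d) := by
        simp only [invol, if_neg hbr]
        exact Prod.ext (by simp; omega) (by simp; omega)
      have he2 : invol (c, d) = (a, b) := by
        have hbr2 : ¬ ((c + d) % 4 = 2) := by omega
        simp only [invol, if_neg hbr2]
        exact Prod.ext (by simp; omega) (by simp; omega)
      rw [he]
      refine ⟨by omega, by omega, norm_nat (Or.inr ⟨h1, Or.inl h3⟩), he2, ?_⟩
      rw [Prod.mk.injEq]; omega
    · obtain ⟨c, d, h1, h2, h3, h4⟩ :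
          ∃ c d, 2*c = a + 3*b ∧ c % 2 = 1 ∧ 2*d + a = b ∧ c = 2*a + 3*d ∧ d % 2 = 1 :=
        ⟨(a + 3*b)/2, (b - a)/2, by omega, by omega, by omega, by omega, by omega⟩
      have he : invol (a, b) = (c, d) := by
        simp only [invol, if_neg hbr]
        exact Prod.ext (by simp; omega) (by simp; omega)
      have he2 : invol (c, d) = (a, b) := by
        have hbr2 : (c + d) % 4 = 2 := by omega
        simp only [invol, if_pos hbr2]
        exact Prod.ext (by simp; omega) (by simp; omega)
      rw [he]
      refine ⟨by omega, by omega, norm_nat (Or.inr ⟨h1, Or.inr h3⟩), he2, ?_⟩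
      rw [Prod.mk.injEq]; omega


def T (n : ℕ) : Finset (ℕ × ℕ) :=
  (Finset.range (n+1) ×ˢ Finset.range (n+1)).filter
    fun p => p.1 % 2 = 1 ∧ p.2 % 2 = 1 ∧ p.1 ^ 2 + 3 * p.2 ^ 2 = n

lemma mem_T {n : ℕ} {p : ℕ × ℕ} :
    p ∈ T n ↔ p.1 % 2 = 1 ∧ p.2 % 2 = 1 ∧ p.1 ^ 2 + 3 * p.2 ^ 2 = n := by
  simp only [T, Finset.mem_filter, Finset.mem_product, Finset.mem_range, Nat.lt_succ_iff]
  constructor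
  · tauto
  · rintro ⟨h1, h2, h3⟩
    refine ⟨⟨?_, ?_⟩, h1, h2, h3⟩ <;> nlinarith [Nat.one_le_iff_ne_zero.2 (by omega : p.1 ≠ 0),
      Nat.one_le_iff_ne_zero.2 (by omega : p.2 ≠ 0)]

lemma sq_ne_three_sq {x y : ℕ} (hx : x % 2 = 1) (hy : y % 2 = 1) : x ^ 2 ≠ 3 * y ^ 2 := by
  intro h
  have hx0 : x ≠ 0 := by omega
  have hy0 : y ≠ 0 := by omega
  have h3 : (x ^ 2).factorization 3 = (3 * y ^ 2).factorization 3 := by rw [h]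
  rw [Nat.factorization_pow, Nat.factorization_mul (by norm_num) (pow_ne_zero 2 hy0),
    Nat.factorization_pow] at h3
  have h5 : (Nat.factorization 3) 3 = 1 := Nat.Prime.factorization_self (by norm_num)
  simp only [Finsupp.add_apply, Finsupp.smul_apply, h5, smul_eq_mul] at h3
  omega


open Classical in
/-- `Δ(q³) = Σ_{m≥0} q^{3(2m+1)²}` in `F₂[[q]]`. -/
noncomputable def DeltaCubedVar : PowerSeries (ZMod 2) :=
  PowerSeries.mk fun n => if ∃ m : ℕ, n = 3 * (2 * m + 1) ^ 2 then 1 else 0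

lemma zmod2_mul_self (x : ZMod 2) : x * x = x := by revert x; decide

lemma coeff_sq (f : PowerSeries (ZMod 2)) (n : ℕ) :
    PowerSeries.coeff (R := ZMod 2) n (f * f) =
      if 2 ∣ n then PowerSeries.coeff (R := ZMod 2) (n / 2) f else 0 := by
  rw [PowerSeries.coeff_mul]
  by_cases h : 2 ∣ n
  · obtain ⟨k, rfl⟩ := h
    have hmem : ((k, k) : ℕ × ℕ) ∈ Finset.HasAntidiagonal.antidiagonal (2 * k) := by
      simp [Finset.HasAntidiagonal.mem_antidiagonal, two_mul]
    rw [if_pos ⟨k, rfl⟩, ← Finset.add_sum_erase _ _ hmem]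
    have hzero : ∑ p ∈ (Finset.HasAntidiagonal.antidiagonal (2 * k)).erase (k, k),
        PowerSeries.coeff (R := ZMod 2) p.1 f * PowerSeries.coeff (R := ZMod 2) p.2 f = 0 := by
      refine Finset.sum_involution (fun p _ => (p.2, p.1)) (fun p hp => ?_)
        (fun p hp _ => ?_) (fun p hp => ?_) (fun p hp => rfl)
      · rw [mul_comm]; exact CharTwo.add_self_eq_zero _
      · have := Finset.mem_of_mem_erase hp
        have hne := Finset.ne_of_mem_erase hp
        simp only [Finset.HasAntidiagonal.mem_antidiagonal] at this
        intro hcon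
        have : p.1 = p.2 := by
          have := congrArg Prod.fst hcon; simpa using this.symm
        exact hne (by rw [Prod.ext_iff]; constructor <;> simp_all <;> omega)
      · have hm := Finset.mem_of_mem_erase hp
        have hne := Finset.ne_of_mem_erase hp
        simp only [Finset.HasAntidiagonal.mem_antidiagonal] at hm ⊢
        refine Finset.mem_erase.2 ⟨?_, by simp [Finset.HasAntidiagonal.mem_antidiagonal]; omega⟩
        intro hcon
        apply hne
        have h1 := congrArg Prod.fst hcon
        have h2 := congrArg Prod.snd hcon
        simp at h1 h2
        exact Prod.ext (by simp [h2]) (by simp [h1])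
    rw [hzero, add_zero, zmod2_mul_self, Nat.mul_div_cancel_left _ (by norm_num)]
  · rw [if_neg h]
    refine Finset.sum_involution (fun p _ => (p.2, p.1)) (fun p hp => ?_)
      (fun p hp _ => ?_) (fun p hp => ?_) (fun p hp => rfl)
    · rw [mul_comm]; exact CharTwo.add_self_eq_zero _
    · simp only [Finset.HasAntidiagonal.mem_antidiagonal] at hp
      intro hcon
      have h1 := congrArg Prod.fst hcon
      simp at h1
      exact h ⟨p.2, by omega⟩
    · simp only [Finset.HasAntidiagonal.mem_antidiagonal] at hp ⊢; omega

lemma coeff_pow4 (f : PowerSeries (ZMod 2)) (n : ℕ) :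
    PowerSeries.coeff (R := ZMod 2) n (f ^ 4) =
      if 4 ∣ n then PowerSeries.coeff (R := ZMod 2) (n / 4) f else 0 := by
  have h4 : f ^ 4 = (f * f) * (f * f) := by ring
  rw [h4, coeff_sq, ]
  by_cases h : 2 ∣ n
  · rw [if_pos h, coeff_sq]
    by_cases h2 : 2 ∣ n / 2
    · rw [if_pos h2, if_pos (by omega), Nat.div_div_eq_div_mul]
    · rw [if_neg h2, if_neg (by omega)]
  · rw [if_neg h, if_neg (by omega)]

open Classical in
lemma coeff_Delta4 (n : ℕ) : PowerSeries.coeff (R := ZMod 2) n (Delta ^ 4) =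
    if ∃ m : ℕ, n = 4 * (2 * m + 1) ^ 2 then 1 else 0 := by
  rw [coeff_pow4, Delta]
  by_cases h : 4 ∣ n
  · rw [if_pos h, PowerSeries.coeff_mk]
    congr 1
    apply propext
    constructor
    · rintro ⟨m, hm⟩; exact ⟨m, by omega⟩
    · rintro ⟨m, hm⟩; exact ⟨m, by omega⟩
  · rw [if_neg h, if_neg (by rintro ⟨m, hm⟩; exact h ⟨(2*m+1)^2, hm⟩)]

open Classical in
lemma coeff_DCV4 (n : ℕ) : PowerSeries.coeff (R := ZMod 2) n (DeltaCubedVar ^ 4) =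
    if ∃ m : ℕ, n = 12 * (2 * m + 1) ^ 2 then 1 else 0 := by
  rw [coeff_pow4, DeltaCubedVar]
  by_cases h : 4 ∣ n
  · rw [if_pos h, PowerSeries.coeff_mk]
    congr 1
    apply propext
    constructor
    · rintro ⟨m, hm⟩; exact ⟨m, by omega⟩
    · rintro ⟨m, hm⟩; exact ⟨m, by omega⟩
  · rw [if_neg h, if_neg (by rintro ⟨m, hm⟩; exact h ⟨3*(2*m+1)^2, by omega⟩)]

open Classical in
lemma coeff_prod (n : ℕ) : PowerSeries.coeff (R := ZMod 2) n (Delta * DeltaCubedVar) =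
    ((T n).card : ZMod 2) := by
  rw [PowerSeries.coeff_mul]
  simp only [Delta, DeltaCubedVar, PowerSeries.coeff_mk]
  have step : ∀ p ∈ Finset.HasAntidiagonal.antidiagonal n,
      (if ∃ m : ℕ, p.1 = (2*m+1)^2 then (1:ZMod 2) else 0) *
      (if ∃ m : ℕ, p.2 = 3*(2*m+1)^2 then (1:ZMod 2) else 0) =
      (if (∃ m : ℕ, p.1 = (2*m+1)^2) ∧ (∃ m : ℕ, p.2 = 3*(2*m+1)^2) then (1:ZMod 2) else 0) := by
    intro p _
    split_ifs <;> simp_all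
  rw [Finset.sum_congr rfl step, ← Finset.sum_filter]
  rw [Finset.sum_const, nsmul_eq_mul, mul_one]
  congr 1
  refine Finset.card_bij' (fun p _ => (Nat.sqrt p.1, Nat.sqrt (p.2 / 3)))
    (fun q _ => (q.1 ^ 2, 3 * q.2 ^ 2)) ?_ ?_ ?_ ?_
  · rintro p hp
    simp only [Finset.mem_filter, Finset.HasAntidiagonal.mem_antidiagonal] at hp
    obtain ⟨hsum, ⟨m, hm⟩, ⟨j, hj⟩⟩ := hp
    have hs1 : Nat.sqrt p.1 = 2*m+1 := by rw [hm, pow_two, Nat.sqrt_eq]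
    have hs2 : Nat.sqrt (p.2 / 3) = 2*j+1 := by
      rw [hj, Nat.mul_div_cancel_left _ (by norm_num), pow_two, Nat.sqrt_eq]
    rw [hs1, hs2]
    refine mem_T.2 ⟨?_, ?_, ?_⟩ <;> dsimp only <;> omega
  · rintro q hq
    obtain ⟨h1, h2, h3⟩ := mem_T.1 hq
    simp only [Finset.mem_filter, Finset.HasAntidiagonal.mem_antidiagonal]
    exact ⟨by omega, ⟨q.1/2, by rw [show 2*(q.1/2)+1 = q.1 from by omega]⟩,
      ⟨q.2/2, by rw [show 2*(q.2/2)+1 = q.2 from by omega]⟩⟩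
  · rintro p hp
    dsimp only
    simp only [Finset.mem_filter, Finset.HasAntidiagonal.mem_antidiagonal] at hp
    obtain ⟨hsum, ⟨m, hm⟩, ⟨j, hj⟩⟩ := hp
    have hs1 : Nat.sqrt p.1 = 2*m+1 := by rw [hm, pow_two, Nat.sqrt_eq]
    have hs2 : Nat.sqrt (p.2 / 3) = 2*j+1 := by
      rw [hj, Nat.mul_div_cancel_left _ (by norm_num), pow_two, Nat.sqrt_eq]
    rw [hs1, hs2]
    exact Prod.ext (by simp [hm]) (by simp [hj])
  · rintro q hq
    dsimp only
    obtain ⟨h1, h2, h3⟩ := mem_T.1 hq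
    have hs1 : Nat.sqrt (q.1 ^ 2) = q.1 := by rw [pow_two, Nat.sqrt_eq]
    have hs2 : Nat.sqrt (3 * q.2 ^ 2 / 3) = q.2 := by
      rw [Nat.mul_div_cancel_left _ (by norm_num), pow_two, Nat.sqrt_eq]
    rw [hs1, hs2]

lemma invol_mem {n : ℕ} {p : ℕ × ℕ} (hp : p ∈ T n) : invol p ∈ T n := by
  obtain ⟨a, b⟩ := p
  obtain ⟨h1, h2, h3⟩ := mem_T.1 hp
  obtain ⟨m1, m2, m3, _, _⟩ := invol_master h1 h2
  exact mem_T.2 ⟨m1, m2, by rw [m3]; exact h3⟩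

lemma invol_invol {n : ℕ} {p : ℕ × ℕ} (hp : p ∈ T n) : invol (invol p) = p := by
  obtain ⟨a, b⟩ := p
  obtain ⟨h1, h2, h3⟩ := mem_T.1 hp
  exact (invol_master h1 h2).2.2.2.1

lemma fixed_cases {n : ℕ} {p : ℕ × ℕ} (hp : p ∈ T n) (hf : invol p = p) :
    (∃ m : ℕ, n = 4*(2*m+1)^2 ∧ p = (2*m+1, 2*m+1)) ∨
    (∃ m : ℕ, n = 12*(2*m+1)^2 ∧ p = (3*(2*m+1), 2*m+1)) := by
  obtain ⟨a, b⟩ := p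
  obtain ⟨h1, h2, h3⟩ := mem_T.1 hp
  have hab := (invol_master h1 h2).2.2.2.2.1 hf
  dsimp only at h1 h2 h3 hab
  obtain ⟨m, hm⟩ : ∃ m, b = 2*m+1 := ⟨b/2, by omega⟩
  rcases hab with hab | hab
  · left
    refine ⟨m, ?_, by rw [hab, hm]⟩
    have : a ^ 2 = b ^ 2 := by rw [hab]
    have hb : b ^ 2 = (2*m+1)^2 := by rw [hm]
    omega
  · right
    refine ⟨m, ?_, by rw [hab, hm]⟩
    have : a ^ 2 = 9 * b ^ 2 := by rw [hab]; ring
    have hb : b ^ 2 = (2*m+1)^2 := by rw [hm]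
    omega

lemma fixed_of_eq {n : ℕ} {p : ℕ × ℕ} (hp : p ∈ T n)
    (h : p.1 = p.2 ∨ p.1 = 3 * p.2) : invol p = p := by
  obtain ⟨a, b⟩ := p
  obtain ⟨h1, h2, _⟩ := mem_T.1 hp
  exact (invol_master h1 h2).2.2.2.2.2 h

open Classical in
lemma card_T_parity (n : ℕ) : ((T n).card : ZMod 2) =
    (if ∃ m : ℕ, n = 4*(2*m+1)^2 then 1 else 0) +
    (if ∃ m : ℕ, n = 12*(2*m+1)^2 then 1 else 0) := by
  have hno : ¬ ((∃ m : ℕ, n = 4*(2*m+1)^2) ∧ (∃ m : ℕ, n = 12*(2*m+1)^2)) := by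
    rintro ⟨⟨m, hm⟩, ⟨k, hk⟩⟩
    exact sq_ne_three_sq (x := 2*m+1) (y := 2*k+1) (by omega) (by omega) (by omega)
  have hcast : ((T n).card : ZMod 2) = ∑ _p ∈ T n, (1 : ZMod 2) := by simp
  by_cases h4 : ∃ m : ℕ, n = 4*(2*m+1)^2
  · obtain ⟨m, hm⟩ := h4
    set k := 2*m+1 with hk
    have hkodd : k % 2 = 1 := by omega
    have hpt : (k, k) ∈ T n := mem_T.2 ⟨hkodd, hkodd, by rw [hm]; ring⟩
    rw [if_pos ⟨m, hm⟩, if_neg (fun h12 => hno ⟨⟨m, hm⟩, h12⟩), hcast,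
      ← Finset.add_sum_erase _ _ hpt]
    have hzero : ∑ _p ∈ (T n).erase (k, k), (1 : ZMod 2) = 0 := by
      refine Finset.sum_involution (fun p _ => invol p) (fun p _ => by decide)
        (fun p hp _ => ?_) (fun p hp => ?_) (fun p hp => ?_)
      · intro hf
        have hpT := Finset.mem_of_mem_erase hp
        rcases fixed_cases hpT hf with ⟨j, hj, hpj⟩ | ⟨j, hj, hpj⟩
        · have : (2*j+1)^2 = k^2 := by omega
          have : 2*j+1 = k := Nat.pow_left_injective (by norm_num) this
          exact (Finset.ne_of_mem_erase hp) (by rw [hpj, this])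
        · exact sq_ne_three_sq hkodd (y := 2*j+1) (by omega) (by omega)
      · have hpT := Finset.mem_of_mem_erase hp
        refine Finset.mem_erase.2 ⟨?_, invol_mem hpT⟩
        intro hcon
        have hcon' : invol p = (k, k) := hcon
        have : p = (k, k) := by
          rw [← invol_invol hpT, hcon']
          exact fixed_of_eq hpt (Or.inl rfl)
        exact Finset.ne_of_mem_erase hp this
      · exact invol_invol (Finset.mem_of_mem_erase hp)
    rw [hzero, add_zero]
  · by_cases h12 : ∃ m : ℕ, n = 12*(2*m+1)^2
    · obtain ⟨m, hm⟩ := h12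
      set k := 2*m+1 with hk
      have hkodd : k % 2 = 1 := by omega
      have hpt : (3*k, k) ∈ T n := mem_T.2 ⟨by omega, hkodd, by rw [hm]; ring⟩
      rw [if_neg h4, if_pos ⟨m, hm⟩, hcast, ← Finset.add_sum_erase _ _ hpt]
      have hzero : ∑ _p ∈ (T n).erase (3*k, k), (1 : ZMod 2) = 0 := by
        refine Finset.sum_involution (fun p _ => invol p) (fun p _ => by decide)
          (fun p hp _ => ?_) (fun p hp => ?_) (fun p hp => ?_)
        · intro hf
          have hpT := Finset.mem_of_mem_erase hp
          rcases fixed_cases hpT hf with ⟨j, hj, hpj⟩ | ⟨j, hj, hpj⟩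
          · exact h4 ⟨j, hj⟩
          · have : (2*j+1)^2 = k^2 := by omega
            have : 2*j+1 = k := Nat.pow_left_injective (by norm_num) this
            exact (Finset.ne_of_mem_erase hp) (by rw [hpj, this])
        · have hpT := Finset.mem_of_mem_erase hp
          refine Finset.mem_erase.2 ⟨?_, invol_mem hpT⟩
          intro hcon
          have hcon' : invol p = (3*k, k) := hcon
          have : p = (3*k, k) := by
            rw [← invol_invol hpT, hcon']
            exact fixed_of_eq hpt (Or.inr rfl)
          exact Finset.ne_of_mem_erase hp this
        · exact invol_invol (Finset.mem_of_mem_erase hp)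
      rw [hzero, add_zero, zero_add]
    · rw [if_neg h4, if_neg h12, hcast]
      rw [show (0 : ZMod 2) + 0 = 0 from by decide]
      refine Finset.sum_involution (fun p _ => invol p) (fun p _ => by decide)
        (fun p hp _ => ?_) (fun p hp => invol_mem hp) (fun p hp => invol_invol hp)
      intro hf
      rcases fixed_cases hp hf with ⟨j, hj, _⟩ | ⟨j, hj, _⟩
      · exact h4 ⟨j, hj⟩
      · exact h12 ⟨j, hj⟩


theorem modular_equation_three :
    DeltaCubedVar ^ 4 + Delta * DeltaCubedVar + Delta ^ 4 = 0 := by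
  classical
  ext n
  rw [map_add, map_add, coeff_DCV4, coeff_prod, card_T_parity, coeff_Delta4, map_zero]
  have key : ∀ u v : ZMod 2, v + (u + v) + u = 0 := by decide
  exact key _ _
end
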